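/- arXiv:2504.13558 — 3 statements merged into one kernel-verified Lean document; each statement's English description precedes it below -/
import Mathlib

section
/- Let d, n, K ∈ ℕ with d, n, K ≥ 1, let β ∈ (0,1] and p ∈ [1,∞). There exist a Lebesgue-measurable set Ω ⊆ [0,1] with Lebesgue measure at most 2^{−Kβp}, a feedforward block F_sr : ℝ^{d×n} → ℝ^{2d×n} of depth 2K and width 4dn with ReLU activation, a single-head softmax self-attention layer F_SA : ℝ^{2d×n} → ℝ^{2d×n}, and an affine map A : ℝ^{2d×n} → ℝ^{d×n} such that A(F_SA(F_sr(X))) = Z(X) for every X ∈ ([0,1] ∖ Ω)^{d×n}. -/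
open Finset Real Set MeasureTheory

noncomputable section

/-- Matrix–vector product with explicit inner dimension `m`. -/
def mulVecN (W : ℕ → ℕ → ℝ) (m : ℕ) (v : ℕ → ℝ) : ℕ → ℝ :=
  fun i => ∑ j ∈ Finset.range m, W i j * v j

/-- Matrix–matrix product with explicit inner dimension `m`. -/
def matMulN (A : ℕ → ℕ → ℝ) (m : ℕ) (B : ℕ → ℕ → ℝ) : ℕ → ℕ → ℝ :=
  fun i j => ∑ t ∈ Finset.range m, A i t * B t j

/-- The ReLU activation. -/
def reluF : ℝ → ℝ := fun x => max x 0

/-- The floor activation. -/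
def floorF : ℝ → ℝ := fun x => (⌊x⌋ : ℝ)

/-- Hidden layers of a feedforward network acting on vectors:
`ffLayers dims Wt b act l x` is the output of the `l`-th hidden layer. -/
def ffLayers (dims : ℕ → ℕ) (Wt : ℕ → ℕ → ℕ → ℝ) (b : ℕ → ℕ → ℝ)
    (act : ℕ → ℕ → ℝ → ℝ) : ℕ → (ℕ → ℝ) → ℕ → ℝ
  | 0, x => x
  | l + 1, x => fun i =>
      act (l + 1) i (mulVecN (Wt (l + 1)) (dims l) (ffLayers dims Wt b act l x) i + b (l + 1) i)

/-- `f` is a feedforward neural network function from `ℝ^k` to `ℝ^{k'}` of depth `L` and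
width `W`, whose activation functions (which may vary between rows and layers) all belong
to `A`.  Vectors are represented as functions `ℕ → ℝ`; only the first `k` coordinates of the
input and the first `k'` coordinates of the output are relevant. -/
def IsFFNet (k k' L W : ℕ) (A : Set (ℝ → ℝ)) (f : (ℕ → ℝ) → ℕ → ℝ) : Prop :=
  ∃ (dims : ℕ → ℕ) (Wt : ℕ → ℕ → ℕ → ℝ) (b : ℕ → ℕ → ℝ) (act : ℕ → ℕ → ℝ → ℝ),
    dims 0 = k ∧ dims L = k' ∧ (∀ l, 0 < l → l < L → dims l ≤ W) ∧
    (∀ l i, act l i ∈ A) ∧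
    ∀ x, f x = mulVecN (Wt L) (dims (L - 1)) (ffLayers dims Wt b act (L - 1) x)

/-- Hidden layers of a feedforward block acting columnwise on matrices, with
column-dependent biases. -/
def ffBlockLayers (dims : ℕ → ℕ) (Wt : ℕ → ℕ → ℕ → ℝ) (B : ℕ → ℕ → ℕ → ℝ)
    (act : ℕ → ℕ → ℝ → ℝ) : ℕ → (ℕ → ℕ → ℝ) → ℕ → ℕ → ℝ
  | 0, X => X
  | l + 1, X => fun i s =>
      act (l + 1) i
        (mulVecN (Wt (l + 1)) (dims l) (fun t => ffBlockLayers dims Wt B act l X t s) i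
          + B (l + 1) i s)

/-- `F` is a feedforward block from `ℝ^{k×n}` to `ℝ^{k'×n}` of depth `L` and width `W`,
with activation functions in `A`; it acts on each column by the same affine maps, the bias
matrices may have distinct columns, and in each layer every row uses some activation from
`A` (possibly varying between rows and layers). -/
def IsFFBlock (k k' L W : ℕ) (A : Set (ℝ → ℝ)) (F : (ℕ → ℕ → ℝ) → ℕ → ℕ → ℝ) : Prop :=
  ∃ (dims : ℕ → ℕ) (Wt : ℕ → ℕ → ℕ → ℝ) (B : ℕ → ℕ → ℕ → ℝ) (act : ℕ → ℕ → ℝ → ℝ),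
    dims 0 = k ∧ dims L = k' ∧ (∀ l, 0 < l → l < L → dims l ≤ W) ∧
    (∀ l i, act l i ∈ A) ∧
    ∀ X i s,
      F X i s = mulVecN (Wt L) (dims (L - 1))
        (fun t => ffBlockLayers dims Wt B act (L - 1) X t s) i

/-- `F` is a single-head softmax self-attention layer on `m × n` matrices:
`F(X) = X + W_O W_V X σ_S[(W_K X)ᵀ (W_Q X)]`, where the softmax is applied columnwise. -/
def IsSelfAttn (m n : ℕ) (F : (ℕ → ℕ → ℝ) → ℕ → ℕ → ℝ) : Prop :=
  ∃ (hs : ℕ) (WO WV WK WQ : ℕ → ℕ → ℝ),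
    ∀ X i j,
      F X i j = X i j +
        matMulN (matMulN WO hs WV) m
          (matMulN X n (fun a b =>
            Real.exp (∑ u ∈ Finset.range hs, matMulN WK m X u a * matMulN WQ m X u b) /
              ∑ t ∈ Finset.range n,
                Real.exp (∑ u ∈ Finset.range hs, matMulN WK m X u t * matMulN WQ m X u b))) i j

/-- An affine map on matrices, acting columnwise: `A(Y) = W Y + b` with `W` a `k'×k`
matrix and `b` a bias matrix. -/
def IsAffineM (k : ℕ) (A : (ℕ → ℕ → ℝ) → ℕ → ℕ → ℝ) : Prop :=
  ∃ (W : ℕ → ℕ → ℝ) (b : ℕ → ℕ → ℝ),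
    ∀ Y i s, A Y i s = mulVecN W k (fun t => Y t s) i + b i s

/-- Embedding of a `d × n` real matrix into the `ℕ`-indexed representation. -/
def embedM {d n : ℕ} (X : Fin d → Fin n → ℝ) : ℕ → ℕ → ℝ :=
  fun i j => if h : i < d ∧ j < n then X ⟨i, h.1⟩ ⟨j, h.2⟩ else 0

/-- The Hölder class `H^β_Q([0,1]^{d×n}, ℝ^{d×n})`: every component of `f` is
`(β,Q)`-Hölder on the unit cube w.r.t. the entrywise sup distance. -/
def HolderClassM (d n : ℕ) (β Q : ℝ)
    (f : (Fin d → Fin n → ℝ) → Fin d → Fin n → ℝ) : Prop :=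
  ∀ X Y : Fin d → Fin n → ℝ,
    (∀ p q, X p q ∈ Set.Icc (0:ℝ) 1) → (∀ p q, Y p q ∈ Set.Icc (0:ℝ) 1) →
    ∀ r s, |f X r s - f Y r s| ≤ Q * dist X Y ^ β

/-- The `j`-th binary digit of `x` (terminating expansion for dyadic rationals). -/
def binDigit (x : ℝ) (j : ℕ) : ℤ :=
  ⌊(2:ℝ) ^ j * x⌋ - 2 * ⌊(2:ℝ) ^ (j - 1) * x⌋

/-- The truncated inner function `φ_K(x) = Σ_{j=1}^K 2 a_j^x 3^{-1-D(j-1)}`. -/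
def phiK (D K : ℕ) (x : ℝ) : ℝ :=
  ∑ j ∈ Finset.Icc 1 K, 2 * (binDigit x j : ℝ) * ((3:ℝ) ^ (1 + D * (j - 1)))⁻¹

/-- The inner function `φ(x) = Σ_{j=1}^∞ 2 a_j^x 3^{-1-D(j-1)}`. -/
def phiInf (D : ℕ) (x : ℝ) : ℝ :=
  ∑' j : ℕ, 2 * (binDigit x (j + 1) : ℝ) * ((3:ℝ) ^ (1 + D * j))⁻¹

/-- The inner matrix `Z(X)`: `Z(X)_{rs}` is independent of `r` and equals
`3^{Kdn+1} Σ_{q=1}^n Σ_{p=1}^d 3^{-((p-1)n+q)} φ_K(X_{pq}) + 1 + (s-1) 3^{Kdn}`. -/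
def innerZ (d n K : ℕ) (X : Fin d → Fin n → ℝ) (s : Fin n) : ℝ :=
  (3:ℝ) ^ (K * d * n + 1) *
      (∑ q : Fin n, ∑ p : Fin d,
        ((3:ℝ) ^ ((p : ℕ) * n + (q : ℕ) + 1))⁻¹ * phiK (d * n) K (X p q))
    + 1 + (s : ℕ) * (3:ℝ) ^ (K * d * n)

/-- The Kolmogorov–Arnold inner sum `3 Σ_{q=1}^n Σ_{p=1}^d 3^{-((p-1)n+q)} φ(X_{pq})`. -/
def innerKA (d n : ℕ) (X : Fin d → Fin n → ℝ) : ℝ :=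
  3 * ∑ q : Fin n, ∑ p : Fin d,
    ((3:ℝ) ^ ((p : ℕ) * n + (q : ℕ) + 1))⁻¹ * phiInf (d * n) (X p q)

/-- The unit cube `[0,1]^{d×n}`. -/
def unitBox (d n : ℕ) : Set (Fin d → Fin n → ℝ) :=
  {X | ∀ p q, X p q ∈ Set.Icc (0:ℝ) 1}

/-- `f` admits a Kolmogorov–Arnold representation with outer functions `g r s`
(defined on the middle-thirds Cantor set), which are Hölder with exponent
`β log 2 / (dn log 3)` and constant `2^β Q`. -/
def HasKARep (d n : ℕ) (β Q : ℝ) (f : (Fin d → Fin n → ℝ) → Fin d → Fin n → ℝ)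
    (g : Fin d → Fin n → ℝ → ℝ) : Prop :=
  (∀ r s, ∀ x ∈ cantorSet, ∀ y ∈ cantorSet,
      |g r s x - g r s y| ≤ (2:ℝ) ^ β * Q * |x - y| ^ (β * Real.log 2 / ((d * n : ℕ) * Real.log 3))) ∧
  (∀ X ∈ unitBox d n, ∀ r s, f X r s = g r s (innerKA d n X))


/-! ### Auxiliary development for `stmt4` -/

namespace Stmt4Aux

lemma relu_of_nonneg {x : ℝ} (h : 0 ≤ x) : reluF x = x := max_eq_left h

lemma relu_of_nonpos {x : ℝ} (h : x ≤ 0) : reluF x = 0 := max_eq_right h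

/-- real-valued digit indicator -/
def dig (t : ℝ) : ℝ := if 1/2 ≤ t then 1 else 0

lemma dig_nonneg (t : ℝ) : 0 ≤ dig t := by unfold dig; split_ifs <;> norm_num

lemma floor_two_fract (y : ℝ) : (⌊2 * Int.fract y⌋ : ℝ) = dig (Int.fract y) := by
  unfold dig
  rcases le_or_gt (1/2) (Int.fract y) with h | h
  · rw [if_pos h]
    have h1 : (1:ℤ) ≤ ⌊2 * Int.fract y⌋ := Int.le_floor.2 (by push_cast; linarith)
    have h2 : ⌊2 * Int.fract y⌋ < 2 := Int.floor_lt.2 (by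
      have := Int.fract_lt_one y; push_cast; linarith)
    have h3 : ⌊2 * Int.fract y⌋ = 1 := by omega
    rw [h3]; norm_num
  · rw [if_neg (not_le.2 h)]
    have h1 : (0:ℤ) ≤ ⌊2 * Int.fract y⌋ := Int.le_floor.2 (by
      have := Int.fract_nonneg y; push_cast; linarith)
    have h2 : ⌊2 * Int.fract y⌋ < 1 := Int.floor_lt.2 (by push_cast; linarith)
    have h3 : ⌊2 * Int.fract y⌋ = 0 := by omega
    rw [h3]; norm_num

lemma floor_double (y : ℝ) : ⌊2 * y⌋ = 2 * ⌊y⌋ + ⌊2 * Int.fract y⌋ := by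
  have e : 2 * y = 2 * Int.fract y + ((2 * ⌊y⌋ : ℤ) : ℝ) := by
    rw [Int.fract]; push_cast; ring
  rw [e, Int.floor_add_intCast]; ring

lemma binDigit_fract (x : ℝ) (i : ℕ) :
    (binDigit x (i + 1) : ℝ) = dig (Int.fract ((2:ℝ) ^ i * x)) := by
  unfold binDigit
  have e1 : i + 1 - 1 = i := rfl
  rw [e1]
  have e2 : (2:ℝ) ^ (i + 1) * x = 2 * ((2:ℝ) ^ i * x) := by rw [pow_succ]; ring
  rw [e2, floor_double]
  push_cast
  rw [floor_two_fract]
  ring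

lemma fract_double (x : ℝ) (i : ℕ) :
    Int.fract ((2:ℝ) ^ (i + 1) * x)
      = 2 * Int.fract ((2:ℝ) ^ i * x) - dig (Int.fract ((2:ℝ) ^ i * x)) := by
  set y := (2:ℝ) ^ i * x with hy
  have e2 : (2:ℝ) ^ (i + 1) * x = 2 * Int.fract y + ((2 * ⌊y⌋ : ℤ) : ℝ) := by
    rw [Int.fract]; push_cast; rw [pow_succ]; ring
  rw [e2, Int.fract_add_intCast]
  rw [Int.fract, floor_two_fract]

lemma thr_diff {ε τ c : ℝ} (hε : 0 < ε) (hτ : τ ∉ Set.Ioo (1/2 - ε) (1/2 : ℝ))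
    (hc0 : 0 ≤ c) (hc1 : c ≤ 1) :
    reluF ((τ - 1/2)/ε + c) - reluF ((τ - 1/2)/ε) = c * dig τ := by
  unfold dig
  rcases le_or_gt (1/2) τ with h | h
  · have h0 : 0 ≤ (τ - 1/2)/ε := div_nonneg (by linarith) hε.le
    rw [relu_of_nonneg (by linarith), relu_of_nonneg h0, if_pos h]; ring
  · have hle : τ ≤ 1/2 - ε := by
      by_contra hgt
      exact hτ ⟨by linarith [not_le.1 hgt], h⟩
    have h0 : (τ - 1/2)/ε ≤ -1 := by
      rw [div_le_iff₀ hε]; linarith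
    rw [relu_of_nonpos (by linarith), relu_of_nonpos (by linarith),
      if_neg (not_le.2 h)]; ring

lemma sum_single {m a : ℕ} (ha : a < m) (c : ℝ) (v : ℕ → ℝ) :
    ∑ t ∈ Finset.range m, (if t = a then c else 0) * v t = c * v a := by
  rw [Finset.sum_eq_single a]
  · simp
  · intro b _ hb; simp [hb]
  · intro h; exact absurd (Finset.mem_range.2 ha) h

lemma sum_pair {m a b : ℕ} (ha : a < m) (hb : b < m) (hab : a ≠ b)
    (α γ : ℝ) (v : ℕ → ℝ) :
    ∑ t ∈ Finset.range m, (if t = a then α else if t = b then γ else 0) * v t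
      = α * v a + γ * v b := by
  have e : ∀ t, (if t = a then α else if t = b then γ else 0) * v t
      = (if t = a then α else 0) * v t + (if t = b then γ else 0) * v t := by
    intro t
    by_cases h1 : t = a <;> by_cases h2 : t = b <;> simp_all <;> ring
  rw [Finset.sum_congr rfl (fun t _ => e t), Finset.sum_add_distrib,
    sum_single ha, sum_single hb]

lemma sum_triple {m a b c : ℕ} (ha : a < m) (hb : b < m) (hc : c < m)
    (hab : a ≠ b) (hac : a ≠ c) (hbc : b ≠ c) (α γ δ : ℝ) (v : ℕ → ℝ) :
    ∑ t ∈ Finset.range m,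
        (if t = a then α else if t = b then γ else if t = c then δ else 0) * v t
      = α * v a + γ * v b + δ * v c := by
  have e : ∀ t, (if t = a then α else if t = b then γ else if t = c then δ else 0) * v t
      = (if t = a then α else 0) * v t
        + (if t = b then γ else if t = c then δ else 0) * v t := by
    intro t
    by_cases h1 : t = a <;> simp_all <;> ring
  rw [Finset.sum_congr rfl (fun t _ => e t), Finset.sum_add_distrib,
    sum_single ha, sum_pair hb hc hbc]
  ring

lemma sum_block (d : ℕ) (hd : 1 ≤ d) (v : ℕ → ℝ) :
    ∑ t ∈ Finset.range (3*d+1),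
        (if t = 2*d then (1:ℝ) else if d ≤ t ∧ t < 2*d then 1 else 0) * v t
      = v (2*d) + ∑ p ∈ Finset.range d, v (d + p) := by
  have e : ∀ t, (if t = 2*d then (1:ℝ) else if d ≤ t ∧ t < 2*d then 1 else 0) * v t
      = (if t = 2*d then (1:ℝ) else 0) * v t
        + (if d ≤ t ∧ t < 2*d then v t else 0) := by
    intro t
    by_cases h1 : t = 2*d
    · have h2 : ¬(d ≤ t ∧ t < 2*d) := by omega
      simp [h1, h2]
    · by_cases h2 : d ≤ t ∧ t < 2*d <;> simp [h1, h2]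
  rw [Finset.sum_congr rfl (fun t _ => e t), Finset.sum_add_distrib,
    sum_single (by omega) 1 v]
  have e2 : ∑ t ∈ Finset.range (3*d+1), (if d ≤ t ∧ t < 2*d then v t else 0)
      = ∑ t ∈ Finset.Ico d (2*d), v t := by
    rw [← Finset.sum_filter]
    apply Finset.sum_congr _ (fun t _ => rfl)
    ext t
    simp only [Finset.mem_filter, Finset.mem_range, Finset.mem_Ico]
    omega
  rw [e2, Finset.sum_Ico_eq_sum_range]
  have : 2*d - d = d := by omega
  rw [this]
  simp [one_mul]

lemma sum_final (d : ℕ) (hd : 1 ≤ d) (v : ℕ → ℝ) :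
    ∑ t ∈ Finset.range (3*d+1),
        (if t < d then (1:ℝ) else if t < 2*d then -1 else if t = 2*d then 1 else 0) * v t
      = (∑ p ∈ Finset.range d, v p) - (∑ p ∈ Finset.range d, v (d + p)) + v (2*d) := by
  have h1 : Finset.range (3*d+1) = Finset.Ico 0 (3*d+1) := by rw [Finset.range_eq_Ico]
  rw [h1, ← Finset.sum_Ico_consecutive _ (by omega : 0 ≤ d) (by omega : d ≤ 3*d+1),
    ← Finset.sum_Ico_consecutive _ (by omega : d ≤ 2*d) (by omega : 2*d ≤ 3*d+1),
    ← Finset.sum_Ico_consecutive _ (by omega : 2*d ≤ 2*d+1) (by omega : 2*d+1 ≤ 3*d+1)]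
  have e1 : ∑ t ∈ Finset.Ico 0 d,
      (if t < d then (1:ℝ) else if t < 2*d then -1 else if t = 2*d then 1 else 0) * v t
      = ∑ p ∈ Finset.range d, v p := by
    rw [← Finset.range_eq_Ico]
    apply Finset.sum_congr rfl
    intro t ht
    rw [if_pos (Finset.mem_range.1 ht)]; ring
  have e2 : ∑ t ∈ Finset.Ico d (2*d),
      (if t < d then (1:ℝ) else if t < 2*d then -1 else if t = 2*d then 1 else 0) * v t
      = -∑ p ∈ Finset.range d, v (d + p) := by
    rw [← Finset.sum_neg_distrib, Finset.sum_Ico_eq_sum_range]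
    have : 2*d - d = d := by omega
    rw [this]
    apply Finset.sum_congr rfl
    intro t ht
    rw [if_neg (by omega), if_pos (by have := Finset.mem_range.1 ht; omega)]; ring
  have e3 : ∑ t ∈ Finset.Ico (2*d) (2*d+1),
      (if t < d then (1:ℝ) else if t < 2*d then -1 else if t = 2*d then 1 else 0) * v t
      = v (2*d) := by
    rw [Finset.sum_Ico_eq_sum_range]
    have : 2*d+1 - 2*d = 1 := by omega
    rw [this, Finset.sum_range_one]
    rw [if_neg (by omega), if_neg (by omega), if_pos (by omega)]; ring
  have e4 : ∑ t ∈ Finset.Ico (2*d+1) (3*d+1),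
      (if t < d then (1:ℝ) else if t < 2*d then -1 else if t = 2*d then 1 else 0) * v t
      = 0 := by
    apply Finset.sum_eq_zero
    intro t ht
    have := Finset.mem_Ico.1 ht
    rw [if_neg (by omega), if_neg (by omega), if_neg (by omega)]; ring
  rw [e1, e2, e3, e4]; ring


/-! ### The network construction -/

/-- coefficient `c_{p,j,q} = 2·3^{-(1+dn(j-1))}·3^{-(pn+q+1)}` -/
def cC (d n p j q : ℕ) : ℝ := 2 * ((3:ℝ) ^ (1 + d*n*(j-1) + (p*n + q + 1)))⁻¹

lemma cC_nonneg (d n p j q : ℕ) : 0 ≤ cC d n p j q := by unfold cC; positivity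

lemma cC_le_one (d n p j q : ℕ) : cC d n p j q ≤ 1 := by
  unfold cC
  have h3 : (3:ℝ) ≤ 3 ^ (1 + d*n*(j-1) + (p*n + q + 1)) := by
    calc (3:ℝ) = 3^1 := (pow_one 3).symm
    _ ≤ _ := pow_le_pow_right₀ (by norm_num) (by omega)
  have hpos : (0:ℝ) < 3 ^ (1 + d*n*(j-1) + (p*n + q + 1)) := by positivity
  have hinv : ((3:ℝ) ^ (1 + d*n*(j-1) + (p*n + q + 1)))⁻¹ ≤ 3⁻¹ := by
    apply inv_anti₀ (by norm_num) h3
  linarith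

def dimsF (d K : ℕ) : ℕ → ℕ := fun l => if l = 0 then d else if l = 2*K then 2*d else 3*d+1

def WtF (d K : ℕ) (ε : ℝ) : ℕ → ℕ → ℕ → ℝ := fun l i t =>
  if l = 2*K then
    (if i = 1 then (if t < d then 1 else if t < 2*d then (-1:ℝ) else if t = 2*d then 1 else 0)
     else 0)
  else if l = 2*K - 1 then
    (if i < d then (if t = i then 1/ε else 0)
     else if i < 2*d then (if t = i - d then 1/ε else 0)
     else if i = 2*d then (if t = 2*d then 1 else if d ≤ t ∧ t < 2*d then 1 else 0)
     else 0)
  else if l % 2 = 1 then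
    (if i < d then (if t = i then 1 else 0)
     else if i < 2*d then (if t = i - d then 1/ε else 0)
     else if i < 3*d then (if t = i - 2*d then 1/ε else 0)
     else if i = 3*d then (if t = 2*d then 1 else if d ≤ t ∧ t < 2*d then 1 else 0)
     else 0)
  else
    (if i < d then (if t = i then 2 else if t = d + i then (-1:ℝ) else if t = 2*d + i then 1 else 0)
     else if i < 2*d then (if t = i then 1 else if t = i + d then (-1:ℝ) else 0)
     else if i = 2*d then (if t = 3*d then 1 else 0)
     else 0)

def BF (d n K : ℕ) (ε : ℝ) : ℕ → ℕ → ℕ → ℝ := fun l i s =>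
  if l = 2*K then 0
  else if l = 2*K - 1 then
    (if i < d then cC d n i K s - 1/(2*ε)
     else if i < 2*d then -(1/(2*ε))
     else 0)
  else if l % 2 = 1 then
    (if i < d then 0
     else if i < 2*d then 1 - 1/(2*ε)
     else if i < 3*d then -(1/(2*ε))
     else 0)
  else
    (if i < d then 0
     else if i < 2*d then cC d n (i - d) (l/2) s - 1
     else 0)

def netF (d n K : ℕ) (ε : ℝ) : ℕ → (ℕ → ℕ → ℝ) → ℕ → ℕ → ℝ :=
  ffBlockLayers (dimsF d K) (WtF d K ε) (BF d n K ε) (fun _ _ => reluF)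

lemma netF_succ (d n K : ℕ) (ε : ℝ) (l : ℕ) (X : ℕ → ℕ → ℝ) (i s : ℕ) :
    netF d n K ε (l+1) X i s
      = reluF (mulVecN (WtF d K ε (l+1)) (dimsF d K l) (fun t => netF d n K ε l X t s) i
          + BF d n K ε (l+1) i s) := rfl

lemma netF_zero (d n K : ℕ) (ε : ℝ) (X : ℕ → ℕ → ℝ) (i s : ℕ) :
    netF d n K ε 0 X i s = X i s := rfl

/-- the running sum after `i` digit steps -/
def Ssum (d n : ℕ) (X : ℕ → ℕ → ℝ) (q i : ℕ) : ℝ :=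
  ∑ j ∈ Finset.range i, ∑ p ∈ Finset.range d,
    cC d n p (j+1) q * dig (Int.fract ((2:ℝ)^j * X p q))

lemma Ssum_nonneg (d n : ℕ) (X : ℕ → ℕ → ℝ) (q i : ℕ) : 0 ≤ Ssum d n X q i := by
  apply Finset.sum_nonneg; intro j _
  apply Finset.sum_nonneg; intro p _
  exact mul_nonneg (cC_nonneg _ _ _ _ _) (dig_nonneg _)

/-- state of a normal A-layer `2i+1` -/
def Asta (d n K : ℕ) (ε : ℝ) (X : ℕ → ℕ → ℝ) (q i : ℕ) : Prop :=
  (∀ p, p < d → netF d n K ε (2*i+1) X p q = Int.fract ((2:ℝ)^i * X p q)) ∧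
  (∀ p, p < d → netF d n K ε (2*i+1) X (d+p) q
      = reluF ((Int.fract ((2:ℝ)^i * X p q) - 1/2)/ε + 1)) ∧
  (∀ p, p < d → netF d n K ε (2*i+1) X (2*d+p) q
      = reluF ((Int.fract ((2:ℝ)^i * X p q) - 1/2)/ε)) ∧
  netF d n K ε (2*i+1) X (3*d) q = Ssum d n X q i

/-- state of a B-layer `2i+2` -/
def Bsta (d n K : ℕ) (ε : ℝ) (X : ℕ → ℕ → ℝ) (q i : ℕ) : Prop :=
  (∀ p, p < d → netF d n K ε (2*i+2) X p q = Int.fract ((2:ℝ)^(i+1) * X p q)) ∧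
  (∀ p, p < d → netF d n K ε (2*i+2) X (d+p) q
      = cC d n p (i+1) q * dig (Int.fract ((2:ℝ)^i * X p q))) ∧
  netF d n K ε (2*i+2) X (2*d) q = Ssum d n X q i

lemma sum_zero_small (d : ℕ) (hd : 1 ≤ d) (v : ℕ → ℝ) :
    ∑ t ∈ Finset.range d,
      (if t = 2*d then (1:ℝ) else if d ≤ t ∧ t < 2*d then 1 else 0) * v t = 0 := by
  apply Finset.sum_eq_zero
  intro t ht
  have := Finset.mem_range.1 ht
  rw [if_neg (by omega), if_neg (by omega)]; ring


lemma relu_dig_add {c t : ℝ} (hc0 : 0 ≤ c) (hc1 : c ≤ 1) :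
    reluF (dig t + (c - 1)) = c * dig t := by
  unfold dig; split_ifs with h
  · rw [show (1:ℝ) + (c-1) = c from by ring, relu_of_nonneg hc0]; ring
  · rw [show (0:ℝ) + (c-1) = c - 1 from by ring, relu_of_nonpos (by linarith)]; ring

section States

variable {d n K : ℕ} {ε : ℝ} {X : ℕ → ℕ → ℝ} {q : ℕ}

lemma stateA0 (hd : 1 ≤ d) (hK : 2 ≤ K) (hε : 0 < ε)
    (hx0 : ∀ p, p < d → 0 ≤ X p q) (hx1 : ∀ p, p < d → X p q < 1) :
    Asta d n K ε X q 0 := by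
  have hfr : ∀ p, p < d → Int.fract ((2:ℝ)^(0:ℕ) * X p q) = X p q := by
    intro p hp; rw [pow_zero, one_mul]; exact Int.fract_eq_self.2 ⟨hx0 p hp, hx1 p hp⟩
  have c1 : ¬(0+1 = 2*K) := by omega
  have c2 : ¬(0+1 = 2*K-1) := by omega
  have c3 : (0+1) % 2 = 1 := by omega
  have el : (2*0+1 : ℕ) = 0+1 := by omega
  have cd : dimsF d K 0 = d := by unfold dimsF; rw [if_pos rfl]
  refine ⟨?_, ?_, ?_, ?_⟩
  · intro p hp
    rw [el, netF_succ]
    simp only [mulVecN, WtF, BF, cd, if_true, if_false, if_neg c1, if_neg c2, if_pos c3, if_true, if_false, if_pos hp]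
    rw [sum_single hp 1 _]
    rw [netF_zero, hfr p hp, add_zero, one_mul]
    exact relu_of_nonneg (hx0 p hp)
  · intro p hp
    rw [el, netF_succ]
    simp only [mulVecN, WtF, BF, cd, if_true, if_false, if_neg c1, if_neg c2, if_pos c3, if_true, if_false,
      if_neg (show ¬(d+p < d) by omega), if_pos (show d+p < 2*d by omega),
      Nat.add_sub_cancel_left]
    rw [sum_single hp (1/ε) _, netF_zero, hfr p hp]
    congr 1
    field_simp
    ring
  · intro p hp
    rw [el, netF_succ]
    simp only [mulVecN, WtF, BF, cd, if_true, if_false, if_neg c1, if_neg c2, if_pos c3, if_true, if_false,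
      if_neg (show ¬(2*d+p < d) by omega), if_neg (show ¬(2*d+p < 2*d) by omega),
      if_pos (show 2*d+p < 3*d by omega), Nat.add_sub_cancel_left]
    rw [sum_single hp (1/ε) _, netF_zero, hfr p hp]
    congr 1
    field_simp
    ring
  · rw [el, netF_succ]
    simp only [mulVecN, WtF, BF, cd, if_true, if_false, if_neg c1, if_neg c2, if_pos c3, if_true, if_false,
      if_neg (show ¬(3*d < d) by omega), if_neg (show ¬(3*d < 2*d) by omega),
      if_neg (show ¬(3*d < 3*d) by omega), if_pos (show 3*d = 3*d from rfl)]
    rw [sum_zero_small d hd, add_zero]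
    rw [show Ssum d n X q 0 = 0 from by simp [Ssum]]
    exact relu_of_nonpos le_rfl

lemma stateB (hd : 1 ≤ d) (hε : 0 < ε) (i : ℕ) (hi : i + 2 ≤ K)
    (hgood : ∀ p, p < d → Int.fract ((2:ℝ)^i * X p q) ∉ Set.Ioo (1/2 - ε) (1/2:ℝ))
    (hA : Asta d n K ε X q i) : Bsta d n K ε X q i := by
  obtain ⟨hA1, hA2, hA3, hA4⟩ := hA
  have el : (2*i+2 : ℕ) = (2*i+1)+1 := by omega
  have c1 : ¬(2*i+1+1 = 2*K) := by omega
  have c2 : ¬(2*i+1+1 = 2*K-1) := by omega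
  have c3 : ¬((2*i+1+1) % 2 = 1) := by omega
  have cd : dimsF d K (2*i+1) = 3*d+1 := by
    unfold dimsF; rw [if_neg (by omega), if_neg (by omega)]
  refine ⟨?_, ?_, ?_⟩
  · intro p hp
    rw [el, netF_succ]
    simp only [mulVecN, WtF, BF, cd, if_true, if_false, if_neg c1, if_neg c2, if_neg c3, if_pos hp]
    rw [sum_triple (show p < 3*d+1 by omega) (show d+p < 3*d+1 by omega)
      (show 2*d+p < 3*d+1 by omega) (by omega) (by omega) (by omega)]
    rw [hA1 p hp, hA2 p hp, hA3 p hp, add_zero]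
    have hdiff : reluF ((Int.fract ((2:ℝ)^i * X p q) - 1/2)/ε + 1)
        - reluF ((Int.fract ((2:ℝ)^i * X p q) - 1/2)/ε)
        = 1 * dig (Int.fract ((2:ℝ)^i * X p q)) :=
      thr_diff hε (hgood p hp) zero_le_one le_rfl
    rw [show 2 * Int.fract ((2:ℝ)^i * X p q)
        + -1 * reluF ((Int.fract ((2:ℝ)^i * X p q) - 1/2)/ε + 1)
        + 1 * reluF ((Int.fract ((2:ℝ)^i * X p q) - 1/2)/ε)
        = 2 * Int.fract ((2:ℝ)^i * X p q) - dig (Int.fract ((2:ℝ)^i * X p q)) from by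
      linear_combination -hdiff]
    have h0 : 0 ≤ 2 * Int.fract ((2:ℝ)^i * X p q) - dig (Int.fract ((2:ℝ)^i * X p q)) := by
      have h := Int.fract_nonneg ((2:ℝ)^(i+1) * X p q)
      rwa [fract_double] at h
    rw [relu_of_nonneg h0, fract_double]
  · intro p hp
    rw [el, netF_succ]
    simp only [mulVecN, WtF, BF, cd, if_true, if_false, if_neg c1, if_neg c2, if_neg c3,
      if_neg (show ¬(d+p < d) by omega), if_pos (show d+p < 2*d by omega),
      Nat.add_sub_cancel_left, show d+p+d = 2*d+p from by omega,
      show (2*i+1+1)/2 = i+1 from by omega]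
    rw [sum_pair (show d+p < 3*d+1 by omega) (show 2*d+p < 3*d+1 by omega) (by omega)]
    rw [hA2 p hp, hA3 p hp]
    have hdiff : reluF ((Int.fract ((2:ℝ)^i * X p q) - 1/2)/ε + 1)
        - reluF ((Int.fract ((2:ℝ)^i * X p q) - 1/2)/ε)
        = 1 * dig (Int.fract ((2:ℝ)^i * X p q)) :=
      thr_diff hε (hgood p hp) zero_le_one le_rfl
    rw [show 1 * reluF ((Int.fract ((2:ℝ)^i * X p q) - 1/2)/ε + 1)
        + -1 * reluF ((Int.fract ((2:ℝ)^i * X p q) - 1/2)/ε)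
        + (cC d n p (i+1) q - 1)
        = dig (Int.fract ((2:ℝ)^i * X p q)) + (cC d n p (i+1) q - 1) from by
      linear_combination hdiff]
    exact relu_dig_add (cC_nonneg _ _ _ _ _) (cC_le_one _ _ _ _ _)
  · rw [el, netF_succ]
    simp only [mulVecN, WtF, BF, cd, if_true, if_false, if_neg c1, if_neg c2, if_neg c3,
      if_neg (show ¬(2*d < d) by omega), if_neg (show ¬(2*d < 2*d) by omega),
      if_pos (show 2*d = 2*d from rfl)]
    rw [sum_single (show 3*d < 3*d+1 by omega) 1 _, hA4, add_zero, one_mul]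
    exact relu_of_nonneg (Ssum_nonneg _ _ _ _ _)

lemma stateAstep (hd : 1 ≤ d) (hε : 0 < ε) (i : ℕ) (hi : i + 3 ≤ K)
    (hB : Bsta d n K ε X q i) : Asta d n K ε X q (i+1) := by
  obtain ⟨hB1, hB2, hB3⟩ := hB
  have el : (2*(i+1)+1 : ℕ) = (2*i+2)+1 := by omega
  have c1 : ¬(2*i+2+1 = 2*K) := by omega
  have c2 : ¬(2*i+2+1 = 2*K-1) := by omega
  have c3 : (2*i+2+1) % 2 = 1 := by omega
  have cd : dimsF d K (2*i+2) = 3*d+1 := by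
    unfold dimsF; rw [if_neg (by omega), if_neg (by omega)]
  refine ⟨?_, ?_, ?_, ?_⟩
  · intro p hp
    rw [el, netF_succ]
    simp only [mulVecN, WtF, BF, cd, if_true, if_false, if_neg c1, if_neg c2, if_pos c3, if_pos hp]
    rw [sum_single (show p < 3*d+1 by omega) 1 _, hB1 p hp, add_zero, one_mul]
    exact relu_of_nonneg (Int.fract_nonneg _)
  · intro p hp
    rw [el, netF_succ]
    simp only [mulVecN, WtF, BF, cd, if_true, if_false, if_neg c1, if_neg c2, if_pos c3,
      if_neg (show ¬(d+p < d) by omega), if_pos (show d+p < 2*d by omega),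
      Nat.add_sub_cancel_left]
    rw [sum_single (show p < 3*d+1 by omega) (1/ε) _, hB1 p hp]
    congr 1
    field_simp
    ring
  · intro p hp
    rw [el, netF_succ]
    simp only [mulVecN, WtF, BF, cd, if_true, if_false, if_neg c1, if_neg c2, if_pos c3,
      if_neg (show ¬(2*d+p < d) by omega), if_neg (show ¬(2*d+p < 2*d) by omega),
      if_pos (show 2*d+p < 3*d by omega), Nat.add_sub_cancel_left]
    rw [sum_single (show p < 3*d+1 by omega) (1/ε) _, hB1 p hp]
    congr 1
    field_simp
    ring
  · rw [el, netF_succ]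
    simp only [mulVecN, WtF, BF, cd, if_true, if_false, if_neg c1, if_neg c2, if_pos c3,
      if_neg (show ¬(3*d < d) by omega), if_neg (show ¬(3*d < 2*d) by omega),
      if_neg (show ¬(3*d < 3*d) by omega), if_pos (show 3*d = 3*d from rfl)]
    rw [sum_block d hd, hB3, add_zero]
    rw [Finset.sum_congr rfl (fun p hp => hB2 p (Finset.mem_range.1 hp))]
    have e : Ssum d n X q i + ∑ p ∈ Finset.range d,
        cC d n p (i+1) q * dig (Int.fract ((2:ℝ)^i * X p q)) = Ssum d n X q (i+1) := by
      unfold Ssum; rw [Finset.sum_range_succ]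
    rw [e]
    exact relu_of_nonneg (Ssum_nonneg _ _ _ _ _)

lemma stateA_all (hd : 1 ≤ d) (hε : 0 < ε)
    (hx0 : ∀ p, p < d → 0 ≤ X p q) (hx1 : ∀ p, p < d → X p q < 1)
    (hgood : ∀ p, p < d → ∀ i, i < K →
      Int.fract ((2:ℝ)^i * X p q) ∉ Set.Ioo (1/2 - ε) (1/2:ℝ)) :
    ∀ i, i + 2 ≤ K → Asta d n K ε X q i := by
  intro i
  induction i with
  | zero => exact fun h => stateA0 hd (by omega) hε hx0 hx1
  | succ m ih =>
      intro h
      exact stateAstep hd hε m (by omega)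
        (stateB hd hε m (by omega) (fun p hp => hgood p hp m (by omega)) (ih (by omega)))

/-- state of the special layer `2K-1` -/
def SstaP (d n K : ℕ) (ε : ℝ) (X : ℕ → ℕ → ℝ) (q : ℕ) : Prop :=
  (∀ p, p < d → netF d n K ε (2*K-1) X p q
      = reluF ((Int.fract ((2:ℝ)^(K-1) * X p q) - 1/2)/ε + cC d n p K q)) ∧
  (∀ p, p < d → netF d n K ε (2*K-1) X (d+p) q
      = reluF ((Int.fract ((2:ℝ)^(K-1) * X p q) - 1/2)/ε)) ∧
  netF d n K ε (2*K-1) X (2*d) q = Ssum d n X q (K-1)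

lemma stateS (hd : 1 ≤ d) (hK : 1 ≤ K) (hε : 0 < ε)
    (hx0 : ∀ p, p < d → 0 ≤ X p q) (hx1 : ∀ p, p < d → X p q < 1)
    (hgood : ∀ p, p < d → ∀ i, i < K →
      Int.fract ((2:ℝ)^i * X p q) ∉ Set.Ioo (1/2 - ε) (1/2:ℝ)) :
    SstaP d n K ε X q := by
  have hfr : ∀ p, p < d → Int.fract ((2:ℝ)^(0:ℕ) * X p q) = X p q := by
    intro p hp; rw [pow_zero, one_mul]; exact Int.fract_eq_self.2 ⟨hx0 p hp, hx1 p hp⟩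
  rcases eq_or_lt_of_le hK with hK1 | hK2
  · -- K = 1
    have hKe : K = 1 := hK1.symm
    subst hKe
    have el : (2*1-1 : ℕ) = 0+1 := by omega
    have c1 : ¬(0+1 = 2*1) := by omega
    have c2 : (0+1 = 2*1-1) := by omega
    have cd : dimsF d 1 0 = d := by unfold dimsF; rw [if_pos rfl]
    have er : (1:ℕ) - 1 = 0 := rfl
    refine ⟨?_, ?_, ?_⟩
    · intro p hp
      rw [er, el, netF_succ]
      simp only [mulVecN, WtF, BF, cd, if_true, if_false, if_neg c1, if_pos c2, if_pos hp]
      rw [sum_single hp (1/ε) _, netF_zero, hfr p hp]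
      congr 1
      field_simp
      ring
    · intro p hp
      rw [er, el, netF_succ]
      simp only [mulVecN, WtF, BF, cd, if_true, if_false, if_neg c1, if_pos c2,
        if_neg (show ¬(d+p < d) by omega), if_pos (show d+p < 2*d by omega),
        Nat.add_sub_cancel_left]
      rw [sum_single hp (1/ε) _, netF_zero, hfr p hp]
      congr 1
      field_simp
      ring
    · rw [er, el, netF_succ]
      simp only [mulVecN, WtF, BF, cd, if_true, if_false, if_neg c1, if_pos c2,
        if_neg (show ¬(2*d < d) by omega), if_neg (show ¬(2*d < 2*d) by omega)]
      rw [sum_zero_small d hd, add_zero]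
      rw [show Ssum d n X q 0 = 0 from by simp [Ssum]]
      exact relu_of_nonpos le_rfl
  · -- K ≥ 2
    have hA := stateA_all (n := n) hd hε hx0 hx1 hgood (K-2) (by omega)
    have hB := stateB hd hε (K-2) (by omega)
      (fun p hp => hgood p hp (K-2) (by omega)) hA
    obtain ⟨hB1, hB2, hB3⟩ := hB
    have el : (2*K-1 : ℕ) = (2*(K-2)+2)+1 := by omega
    have c1 : ¬(2*(K-2)+2+1 = 2*K) := by omega
    have c2 : (2*(K-2)+2+1 = 2*K-1) := by omega
    have cd : dimsF d K (2*(K-2)+2) = 3*d+1 := by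
      unfold dimsF; rw [if_neg (by omega), if_neg (by omega)]
    have ee : (K:ℕ)-2+1 = K-1 := by omega
    refine ⟨?_, ?_, ?_⟩
    · intro p hp
      rw [el, netF_succ]
      simp only [mulVecN, WtF, BF, cd, if_true, if_false, if_neg c1, if_pos c2, if_pos hp]
      rw [sum_single (show p < 3*d+1 by omega) (1/ε) _]
      rw [show (2:ℕ)*(K-2)+2 = 2*(K-2)+2 from rfl]
      rw [hB1 p hp, ee]
      congr 1
      field_simp
      ring
    · intro p hp
      rw [el, netF_succ]
      simp only [mulVecN, WtF, BF, cd, if_true, if_false, if_neg c1, if_pos c2,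
        if_neg (show ¬(d+p < d) by omega), if_pos (show d+p < 2*d by omega),
        Nat.add_sub_cancel_left]
      rw [sum_single (show p < 3*d+1 by omega) (1/ε) _, hB1 p hp, ee]
      congr 1
      field_simp
      ring
    · rw [el, netF_succ]
      simp only [mulVecN, WtF, BF, cd, if_true, if_false, if_neg c1, if_pos c2,
        if_neg (show ¬(2*d < d) by omega), if_neg (show ¬(2*d < 2*d) by omega)]
      rw [sum_block d hd, hB3, add_zero]
      rw [Finset.sum_congr rfl (fun p hp => hB2 p (Finset.mem_range.1 hp))]
      have e : Ssum d n X q (K-2) + ∑ p ∈ Finset.range d,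
          cC d n p (K-2+1) q * dig (Int.fract ((2:ℝ)^(K-2) * X p q))
          = Ssum d n X q (K-2+1) := by
        unfold Ssum; rw [Finset.sum_range_succ]
      rw [e, ee]
      exact relu_of_nonneg (Ssum_nonneg _ _ _ _ _)

end States


/-! ### the feedforward block -/

def FsrF (d n K : ℕ) (ε : ℝ) : (ℕ → ℕ → ℝ) → ℕ → ℕ → ℝ :=
  fun X i s => mulVecN (WtF d K ε (2*K)) (dimsF d K (2*K - 1))
    (fun t => netF d n K ε (2*K-1) X t s) i

lemma FsrF_isBlock (d n K : ℕ) (hd : 1 ≤ d) (hn : 1 ≤ n) (hK : 1 ≤ K) (ε : ℝ) :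
    IsFFBlock d (2*d) (2*K) (4*d*n) {reluF} (FsrF d n K ε) := by
  refine ⟨dimsF d K, WtF d K ε, BF d n K ε, fun _ _ => reluF, ?_, ?_, ?_, ?_, ?_⟩
  · unfold dimsF; rw [if_pos rfl]
  · unfold dimsF; rw [if_neg (by omega), if_pos rfl]
  · intro l hl0 hlL
    unfold dimsF
    rw [if_neg (by omega), if_neg (by omega)]
    have : 4*d ≤ 4*d*n := Nat.le_mul_of_pos_right _ hn
    omega
  · intro l i; exact rfl
  · intro Xx i s; rfl

lemma FsrF_zero (d n K : ℕ) (ε : ℝ) (X : ℕ → ℕ → ℝ) (s : ℕ) :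
    FsrF d n K ε X 0 s = 0 := by
  unfold FsrF mulVecN
  apply Finset.sum_eq_zero
  intro t ht
  simp only [WtF, eq_self_iff_true, if_true, if_neg (show ¬(0 = 1) by omega)]
  ring

lemma FsrF_one (d n K : ℕ) (hd : 1 ≤ d) (hK : 1 ≤ K) (ε : ℝ) (hε : 0 < ε)
    (X : ℕ → ℕ → ℝ) (q : ℕ)
    (hx0 : ∀ p, p < d → 0 ≤ X p q) (hx1 : ∀ p, p < d → X p q < 1)
    (hgood : ∀ p, p < d → ∀ i, i < K →
      Int.fract ((2:ℝ)^i * X p q) ∉ Set.Ioo (1/2 - ε) (1/2:ℝ)) :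
    FsrF d n K ε X 1 q = Ssum d n X q K := by
  obtain ⟨hS1, hS2, hS3⟩ := stateS (n := n) hd hK hε hx0 hx1 hgood
  unfold FsrF mulVecN
  have cd : dimsF d K (2*K-1) = 3*d+1 := by
    unfold dimsF; rw [if_neg (by omega), if_neg (by omega)]
  rw [cd]
  simp only [WtF, eq_self_iff_true, if_true]
  rw [sum_final d hd, hS3, ← Finset.sum_sub_distrib]
  have e1 : ∀ p ∈ Finset.range d,
      netF d n K ε (2*K-1) X p q - netF d n K ε (2*K-1) X (d+p) q
      = cC d n p K q * dig (Int.fract ((2:ℝ)^(K-1) * X p q)) := by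
    intro p hp
    have hp' := Finset.mem_range.1 hp
    rw [hS1 p hp', hS2 p hp']
    exact thr_diff hε (hgood p hp' (K-1) (by omega)) (cC_nonneg _ _ _ _ _)
      (cC_le_one _ _ _ _ _)
  rw [Finset.sum_congr rfl e1]
  have e2 : Ssum d n X q (K-1+1) = Ssum d n X q (K-1)
      + ∑ p ∈ Finset.range d, cC d n p (K-1+1) q
          * dig (Int.fract ((2:ℝ)^(K-1) * X p q)) := by
    unfold Ssum; rw [Finset.sum_range_succ]
  have e3 : (K:ℕ)-1+1 = K := by omega
  rw [e3] at e2
  rw [e2]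
  ring

lemma Ssum_eq_phiK (d n K : ℕ) (X : ℕ → ℕ → ℝ) (q : ℕ) :
    Ssum d n X q K = ∑ p ∈ Finset.range d,
      ((3:ℝ) ^ (p*n + q + 1))⁻¹ * phiK (d*n) K (X p q) := by
  unfold Ssum phiK
  rw [Finset.sum_comm]
  apply Finset.sum_congr rfl
  intro p _
  rw [Finset.mul_sum]
  rw [show Finset.Icc 1 K = Finset.Ico 1 (K+1) from by rw [Finset.Ico_add_one_right_eq_Icc]]
  rw [Finset.sum_Ico_eq_sum_range]
  rw [show K + 1 - 1 = K from by omega]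
  apply Finset.sum_congr rfl
  intro j _
  rw [show 1 + j = j + 1 from by omega]
  rw [binDigit_fract]
  unfold cC
  rw [show (j:ℕ)+1-1 = j from by omega]
  rw [pow_add, mul_inv]
  ring

/-! ### the exceptional set -/

def badSet (ε : ℝ) (i : ℕ) : Set ℝ :=
  {x : ℝ | x ∈ Set.Icc (0:ℝ) 1 ∧ Int.fract ((2:ℝ)^i * x) ∈ Set.Ioo (1/2 - ε) (1/2:ℝ)}

lemma badSet_meas (ε : ℝ) (i : ℕ) : MeasurableSet (badSet ε i) := by
  have he : badSet ε i = Set.Icc 0 1 ∩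
      (fun x : ℝ => Int.fract ((2:ℝ)^i * x)) ⁻¹' (Set.Ioo (1/2 - ε) (1/2:ℝ)) := rfl
  rw [he]
  exact measurableSet_Icc.inter
    (measurableSet_Ioo.preimage (measurable_fract.comp (measurable_id.const_mul _)))

lemma badSet_measure (ε : ℝ) (hε : 0 < ε) (i : ℕ) :
    volume (badSet ε i) ≤ ENNReal.ofReal (2*ε) := by
  have hsub : badSet ε i ⊆ ⋃ m ∈ Finset.range (2^i+1),
      Set.Ioo (((m:ℝ) + (1/2 - ε))/2^i) (((m:ℝ) + 1/2)/2^i) := by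
    intro x hx
    obtain ⟨⟨hx0, hx1⟩, hf1, hf2⟩ := hx
    set y := (2:ℝ)^i * x with hy
    have h2i : (0:ℝ) < 2^i := by positivity
    have hy0 : 0 ≤ y := mul_nonneg h2i.le hx0
    have hyle : y ≤ 2^i := by
      calc y ≤ (2:ℝ)^i * 1 := by
            rw [hy]; exact mul_le_mul_of_nonneg_left hx1 h2i.le
      _ = 2^i := mul_one _
    have hfl0 : 0 ≤ ⌊y⌋ := Int.floor_nonneg.2 hy0
    have hfl1 : ⌊y⌋ ≤ ((2^i : ℕ) : ℤ) := by
      have h : (⌊y⌋ : ℝ) ≤ ((2^i : ℕ) : ℝ) := by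
        push_cast
        exact le_trans (Int.floor_le y) hyle
      exact_mod_cast h
    have hmm : (⌊y⌋.toNat : ℝ) = (⌊y⌋ : ℝ) := by
      exact_mod_cast Int.toNat_of_nonneg hfl0
    have hfr : Int.fract y = y - ⌊y⌋ := rfl
    rw [hfr] at hf1 hf2
    have hmem : ⌊y⌋.toNat ∈ Finset.range (2^i+1) := by
      refine Finset.mem_range.2 ?_
      have := Int.toNat_le.2 hfl1
      omega
    refine Set.mem_biUnion hmem ⟨?_, ?_⟩
    · rw [div_lt_iff₀ h2i, hmm]
      nlinarith
    · rw [lt_div_iff₀ h2i, hmm]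
      nlinarith
  calc volume (badSet ε i) ≤ volume (⋃ m ∈ Finset.range (2^i+1),
      Set.Ioo (((m:ℝ) + (1/2 - ε))/2^i) (((m:ℝ) + 1/2)/2^i)) := measure_mono hsub
  _ ≤ ∑ m ∈ Finset.range (2^i+1),
      volume (Set.Ioo (((m:ℝ) + (1/2 - ε))/2^i) (((m:ℝ) + 1/2)/2^i)) :=
      measure_biUnion_finset_le _ _
  _ = ∑ m ∈ Finset.range (2^i+1), ENNReal.ofReal (ε/2^i) := by
      apply Finset.sum_congr rfl
      intro m _
      rw [Real.volume_Ioo]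
      congr 1
      have h2i : (0:ℝ) < 2^i := by positivity
      field_simp
      ring
  _ = ((2^i+1 : ℕ) : ENNReal) * ENNReal.ofReal (ε/2^i) := by
      rw [Finset.sum_const, Finset.card_range, nsmul_eq_mul]
  _ = ENNReal.ofReal (((2^i+1 : ℕ) : ℝ) * (ε/2^i)) := by
      rw [ENNReal.ofReal_mul (by positivity), ENNReal.ofReal_natCast]
  _ ≤ ENNReal.ofReal (2*ε) := by
      apply ENNReal.ofReal_le_ofReal
      have h2i : (0:ℝ) < 2^i := by positivity
      have hb : ((2^i+1 : ℕ) : ℝ) ≤ 2 * 2^i := by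
        push_cast
        have : (1:ℝ) ≤ 2^i := one_le_pow₀ (by norm_num)
        linarith
      calc ((2^i+1 : ℕ) : ℝ) * (ε/2^i) ≤ (2*2^i) * (ε/2^i) := by
            apply mul_le_mul_of_nonneg_right hb (by positivity)
      _ = 2*ε := by field_simp

/-! ### the attention computation -/

lemma attn_value (m N : ℕ) (hN : 1 ≤ N) (c : ℝ) (row : ℕ) (hrow : row < m)
    (U : ℕ → ℕ → ℝ) (j : ℕ) :
    matMulN (matMulN (fun i u => if i = 0 ∧ u = 0 then c else 0) 1
        (fun u t => if u = 0 ∧ t = row then (1:ℝ) else 0)) m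
      (matMulN U N (fun a b =>
        Real.exp (∑ u ∈ Finset.range 1,
            matMulN (fun _ _ => (0:ℝ)) m U u a * matMulN (fun _ _ => (0:ℝ)) m U u b) /
          ∑ t ∈ Finset.range N,
            Real.exp (∑ u ∈ Finset.range 1,
              matMulN (fun _ _ => (0:ℝ)) m U u t * matMulN (fun _ _ => (0:ℝ)) m U u b))) 0 j
    = c * ((∑ a ∈ Finset.range N, U row a) / N) := by
  have hM : ∀ t, matMulN (fun i u => if i = 0 ∧ u = 0 then c else 0) 1
      (fun u t' => if u = 0 ∧ t' = row then (1:ℝ) else 0) 0 t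
      = (if t = row then c else 0) := by
    intro t
    simp only [matMulN, Finset.sum_range_one]
    by_cases h : t = row <;> simp [h]
  have hV : ∀ t, matMulN U N (fun a b =>
      Real.exp (∑ u ∈ Finset.range 1,
          matMulN (fun _ _ => (0:ℝ)) m U u a * matMulN (fun _ _ => (0:ℝ)) m U u b) /
        ∑ t' ∈ Finset.range N,
          Real.exp (∑ u ∈ Finset.range 1,
            matMulN (fun _ _ => (0:ℝ)) m U u t' * matMulN (fun _ _ => (0:ℝ)) m U u b)) t j
      = (∑ a ∈ Finset.range N, U t a) / N := by
    intro t
    simp only [matMulN, zero_mul, Finset.sum_const_zero, mul_zero, Real.exp_zero,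
      Finset.sum_const, Finset.card_range, nsmul_eq_mul, mul_one, one_div]
    rw [← Finset.sum_mul, ← div_eq_mul_inv]
  have expand : ∀ (A B : ℕ → ℕ → ℝ), matMulN A m B 0 j
      = ∑ t ∈ Finset.range m, A 0 t * B t j := fun A B => rfl
  rw [expand]
  rw [Finset.sum_congr rfl (fun t _ => by rw [hM t, hV t])]
  rw [sum_single hrow]

end Stmt4Aux




theorem stmt4 (d n K : ℕ) (hd : 1 ≤ d) (hn : 1 ≤ n) (hK : 1 ≤ K)
    (β : ℝ) (hβ0 : 0 < β) (hβ1 : β ≤ 1) (p : ℝ) (hp : 1 ≤ p) :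
    ∃ Ω : Set ℝ, MeasurableSet Ω ∧ Ω ⊆ Set.Icc 0 1 ∧
      volume Ω ≤ ENNReal.ofReal ((2:ℝ) ^ (-((K : ℝ) * β * p))) ∧
      ∃ Fsr FSA Aff : (ℕ → ℕ → ℝ) → ℕ → ℕ → ℝ,
        IsFFBlock d (2 * d) (2 * K) (4 * d * n) {reluF} Fsr ∧
        IsSelfAttn (2 * d) n FSA ∧
        IsAffineM (2 * d) Aff ∧
        ∀ X : Fin d → Fin n → ℝ, (∀ i j, X i j ∈ Set.Icc (0:ℝ) 1 \ Ω) →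
          ∀ (r : Fin d) (s : Fin n),
            Aff (FSA (Fsr (embedM X))) (r : ℕ) (s : ℕ) = innerZ d n K X s := by
  classical
  have hK0 : (0:ℝ) < (K:ℝ) := by exact_mod_cast hK
  set ε : ℝ := (2:ℝ) ^ (-((K : ℝ) * β * p)) / (2*K) with hεdef
  have hA0 : (0:ℝ) < (2:ℝ) ^ (-((K : ℝ) * β * p)) := Real.rpow_pos_of_pos (by norm_num) _
  have hεpos : 0 < ε := div_pos hA0 (by linarith)
  refine ⟨(⋃ i ∈ Finset.range K, Stmt4Aux.badSet ε i) ∪ {1}, ?_, ?_, ?_, ?_⟩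
  · exact ((Finset.range K).measurableSet_biUnion
      (fun i _ => Stmt4Aux.badSet_meas ε i)).union (measurableSet_singleton 1)
  · intro x hx
    rcases hx with hx | hx
    · simp only [Set.mem_iUnion] at hx
      obtain ⟨i, _, hxi⟩ := hx
      exact hxi.1
    · rw [Set.mem_singleton_iff] at hx
      rw [hx]
      exact Set.mem_Icc.2 ⟨by norm_num, le_rfl⟩
  · have h1 : volume ((⋃ i ∈ Finset.range K, Stmt4Aux.badSet ε i) ∪ ({1}:Set ℝ))
        ≤ volume (⋃ i ∈ Finset.range K, Stmt4Aux.badSet ε i) + volume ({1}:Set ℝ) :=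
      measure_union_le _ _
    have h2 : volume (({1}:Set ℝ)) = 0 := Real.volume_singleton
    have h3 : volume (⋃ i ∈ Finset.range K, Stmt4Aux.badSet ε i)
        ≤ ∑ i ∈ Finset.range K, volume (Stmt4Aux.badSet ε i) :=
      measure_biUnion_finset_le _ _
    have h4 : ∑ i ∈ Finset.range K, volume (Stmt4Aux.badSet ε i)
        ≤ ∑ i ∈ Finset.range K, ENNReal.ofReal (2*ε) :=
      Finset.sum_le_sum (fun i _ => Stmt4Aux.badSet_measure ε hεpos i)
    have h5 : (∑ i ∈ Finset.range K, ENNReal.ofReal (2*ε))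
        = ENNReal.ofReal ((K:ℝ) * (2*ε)) := by
      rw [Finset.sum_const, Finset.card_range, nsmul_eq_mul,
        ← ENNReal.ofReal_natCast K, ← ENNReal.ofReal_mul (by positivity)]
    have h6 : (K:ℝ) * (2*ε) = (2:ℝ) ^ (-((K : ℝ) * β * p)) := by
      rw [hεdef]
      have hKne : (K:ℝ) ≠ 0 := ne_of_gt hK0
      field_simp
    refine le_trans h1 ?_
    rw [h2, add_zero]
    refine le_trans h3 (le_trans h4 ?_)
    rw [h5, h6]
  · refine ⟨Stmt4Aux.FsrF d n K ε,
      (fun Y i j => Y i j +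
        matMulN (matMulN (fun i' u => if i' = 0 ∧ u = 0 then (n:ℝ) * 3^(K*d*n+1) else 0) 1
            (fun u t => if u = 0 ∧ t = 1 then (1:ℝ) else 0)) (2*d)
          (matMulN Y n (fun a b =>
            Real.exp (∑ u ∈ Finset.range 1,
                matMulN (fun _ _ => (0:ℝ)) (2*d) Y u a * matMulN (fun _ _ => (0:ℝ)) (2*d) Y u b) /
              ∑ t ∈ Finset.range n,
                Real.exp (∑ u ∈ Finset.range 1,
                  matMulN (fun _ _ => (0:ℝ)) (2*d) Y u t
                    * matMulN (fun _ _ => (0:ℝ)) (2*d) Y u b))) i j),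
      (fun Y i s => mulVecN (fun _ t => if t = 0 then (1:ℝ) else 0) (2*d)
          (fun t => Y t s) i + (1 + (s:ℝ) * 3^(K*d*n))),
      Stmt4Aux.FsrF_isBlock d n K hd hn hK ε, ?_, ?_, ?_⟩
    · exact ⟨1, (fun i' u => if i' = 0 ∧ u = 0 then (n:ℝ) * 3^(K*d*n+1) else 0),
        (fun u t => if u = 0 ∧ t = 1 then (1:ℝ) else 0),
        (fun _ _ => (0:ℝ)), (fun _ _ => (0:ℝ)), fun X i j => rfl⟩
    · exact ⟨(fun _ t => if t = 0 then (1:ℝ) else 0),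
        (fun i s => 1 + (s:ℝ) * 3^(K*d*n)), fun Y i s => rfl⟩
    · intro X hX r s
      have hEmem : ∀ p' q', p' < d → q' < n →
          embedM X p' q' ∈ Set.Icc (0:ℝ) 1 \
            ((⋃ i ∈ Finset.range K, Stmt4Aux.badSet ε i) ∪ {1}) := by
        intro p' q' hp' hq'
        have he : embedM X p' q' = X ⟨p', hp'⟩ ⟨q', hq'⟩ := by
          simp [embedM, hp', hq']
        rw [he]
        exact hX _ _
      have hx0 : ∀ q', q' < n → ∀ p', p' < d → 0 ≤ embedM X p' q' :=
        fun q' hq' p' hp' => (hEmem p' q' hp' hq').1.1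
      have hx1 : ∀ q', q' < n → ∀ p', p' < d → embedM X p' q' < 1 := by
        intro q' hq' p' hp'
        have h := hEmem p' q' hp' hq'
        rcases lt_or_eq_of_le h.1.2 with hlt | heq
        · exact hlt
        · exact absurd (Set.mem_union_right _ (Set.mem_singleton_iff.2 heq)) h.2
      have hgood : ∀ q', q' < n → ∀ p', p' < d → ∀ i, i < K →
          Int.fract ((2:ℝ)^i * embedM X p' q') ∉ Set.Ioo (1/2 - ε) (1/2:ℝ) := by
        intro q' hq' p' hp' i hi hmem
        have h := hEmem p' q' hp' hq'
        apply h.2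
        apply Set.mem_union_left
        refine Set.mem_biUnion (Finset.mem_range.2 hi) ?_
        exact ⟨⟨hx0 q' hq' p' hp', h.1.2⟩, hmem⟩
      have hU1 : ∀ a, a < n → Stmt4Aux.FsrF d n K ε (embedM X) 1 a
          = ∑ p' ∈ Finset.range d,
              ((3:ℝ) ^ (p'*n + a + 1))⁻¹ * phiK (d*n) K (embedM X p' a) := by
        intro a ha
        rw [Stmt4Aux.FsrF_one d n K hd hK ε hεpos (embedM X) a
          (hx0 a ha) (hx1 a ha) (fun p' hp' i hi => hgood a ha p' hp' i hi),
          Stmt4Aux.Ssum_eq_phiK]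
      show mulVecN (fun _ t => if t = 0 then (1:ℝ) else 0) (2*d)
          (fun t => Stmt4Aux.FsrF d n K ε (embedM X) t ↑s +
            matMulN (matMulN (fun i' u => if i' = 0 ∧ u = 0 then (n:ℝ) * 3^(K*d*n+1) else 0) 1
                (fun u t' => if u = 0 ∧ t' = 1 then (1:ℝ) else 0)) (2*d)
              (matMulN (Stmt4Aux.FsrF d n K ε (embedM X)) n (fun a b =>
                Real.exp (∑ u ∈ Finset.range 1,
                    matMulN (fun _ _ => (0:ℝ)) (2*d) (Stmt4Aux.FsrF d n K ε (embedM X)) u a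
                      * matMulN (fun _ _ => (0:ℝ)) (2*d) (Stmt4Aux.FsrF d n K ε (embedM X)) u b) /
                  ∑ t' ∈ Finset.range n,
                    Real.exp (∑ u ∈ Finset.range 1,
                      matMulN (fun _ _ => (0:ℝ)) (2*d) (Stmt4Aux.FsrF d n K ε (embedM X)) u t'
                        * matMulN (fun _ _ => (0:ℝ)) (2*d) (Stmt4Aux.FsrF d n K ε (embedM X)) u b))) t ↑s)
          ↑r + (1 + ((s:ℕ):ℝ) * 3^(K*d*n)) = innerZ d n K X s
      simp only [mulVecN]
      rw [Stmt4Aux.sum_single (show 0 < 2*d by omega), one_mul]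
      rw [Stmt4Aux.FsrF_zero d n K ε (embedM X) ↑s]
      rw [Stmt4Aux.attn_value (2*d) n hn ((n:ℝ) * 3^(K*d*n+1)) 1 (show 1 < 2*d by omega)
        (Stmt4Aux.FsrF d n K ε (embedM X)) ↑s]
      rw [Finset.sum_congr rfl (fun a ha => hU1 a (Finset.mem_range.1 ha))]
      unfold innerZ
      have hXE : ∀ (pp : Fin d) (qq : Fin n), X pp qq = embedM X ↑pp ↑qq := by
        intro pp qq
        simp [embedM, pp.isLt, qq.isLt]
      simp only [hXE]
      rw [Fin.sum_univ_eq_sum_range (fun a => ∑ pp : Fin d,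
        ((3:ℝ) ^ ((pp:ℕ)*n + a + 1))⁻¹ * phiK (d*n) K (embedM X ↑pp a)) n]
      rw [Finset.sum_congr rfl (fun a _ => Fin.sum_univ_eq_sum_range
        (fun p' => ((3:ℝ) ^ (p'*n + a + 1))⁻¹ * phiK (d*n) K (embedM X p' a)) d)]
      have hn0 : (n:ℝ) ≠ 0 := Nat.cast_ne_zero.2 (by omega)
      field_simp
      ring


end
end

section
/- Let d, n, K ∈ ℕ with d, n, K ≥ 1. There exist a feedforward block F_sr : ℝ^{d×n} → ℝ^{2d×n} of depth K + 3 and width 3dn with activation functions ReLU and floor, a single-head softmax self-attention layer F_SA : ℝ^{2d×n} → ℝ^{2d×n}, and an affine map A : ℝ^{2d×n} → ℝ^{d×n} such that A(F_SA(F_sr(X))) = Z(X) for every X ∈ [0,1)^{d×n}. -/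
open Finset Real Set MeasureTheory

noncomputable section

/-! ### Auxiliary machinery for `stmt5` -/

/-- Real-valued binary digit. -/
def bdR (x : ℝ) (j : ℕ) : ℝ := ((binDigit x j : ℤ) : ℝ)

lemma binDigit_succ (x : ℝ) (j : ℕ) :
    binDigit x (j + 1) = ⌊2 * Int.fract ((2:ℝ) ^ j * x)⌋ := by
  unfold binDigit
  simp only [Nat.add_sub_cancel]
  have h : 2 * Int.fract ((2:ℝ) ^ j * x)
      = (2:ℝ) ^ (j+1) * x - ((2 * ⌊(2:ℝ) ^ j * x⌋ : ℤ) : ℝ) := by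
    unfold Int.fract; push_cast [pow_succ]; ring
  rw [h, Int.floor_sub_intCast]

lemma fract_succ' (x : ℝ) (j : ℕ) :
    Int.fract ((2:ℝ) ^ (j + 1) * x) = 2 * Int.fract ((2:ℝ) ^ j * x) - bdR x (j + 1) := by
  unfold bdR binDigit Int.fract
  simp only [Nat.add_sub_cancel]
  push_cast [pow_succ]
  ring

lemma bd01 (x : ℝ) (j : ℕ) (hj : 1 ≤ j) : bdR x j = 0 ∨ bdR x j = 1 := by
  obtain ⟨m, rfl⟩ : ∃ m, j = m + 1 := ⟨j - 1, by omega⟩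
  have h0 : 0 ≤ Int.fract ((2:ℝ) ^ m * x) := Int.fract_nonneg _
  have h1 : Int.fract ((2:ℝ) ^ m * x) < 1 := Int.fract_lt_one _
  have hb : binDigit x (m + 1) = 0 ∨ binDigit x (m + 1) = 1 := by
    rw [binDigit_succ]
    have l0 : (0:ℤ) ≤ ⌊2 * Int.fract ((2:ℝ) ^ m * x)⌋ := Int.floor_nonneg.2 (by linarith)
    have l1 : ⌊2 * Int.fract ((2:ℝ) ^ m * x)⌋ < 2 := by
      have : 2 * Int.fract ((2:ℝ) ^ m * x) < ((2:ℤ) : ℝ) := by push_cast; linarith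
      exact Int.floor_lt.2 this
    omega
  unfold bdR
  rcases hb with h | h <;> simp [h]

lemma bdR_nonneg (x : ℝ) (j : ℕ) (hj : 1 ≤ j) : 0 ≤ bdR x j := by
  rcases bd01 x j hj with h | h <;> simp [h]

lemma relu_of_nonneg {x : ℝ} (hx : 0 ≤ x) : reluF x = x := max_eq_left hx

/-- Indicator row vector. -/
def ind (k : ℕ) (a : ℝ) : ℕ → ℝ := fun j => if j = k then a else 0

lemma sum_ind_mul (M k : ℕ) (a : ℝ) (v : ℕ → ℝ) (hk : k < M) :
    ∑ j ∈ Finset.range M, ind k a j * v j = a * v k := by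
  rw [Finset.sum_eq_single k (fun b _ hb => by simp [ind, hb])
    (fun h => absurd (Finset.mem_range.2 hk) h)]
  simp [ind]

def cpq (n p s : ℕ) : ℝ := ((3:ℝ) ^ (p * n + s + 1))⁻¹

lemma cpq_nonneg (n p s : ℕ) : 0 ≤ cpq n p s := by unfold cpq; positivity

lemma cpq_le_one (n p s : ℕ) : cpq n p s ≤ 1 := by
  unfold cpq
  rw [inv_le_one_iff₀]
  right
  exact one_le_pow₀ (by norm_num)

def thJ (D j : ℕ) : ℝ := ((3:ℝ) ^ (1 + D * (j - 1)))⁻¹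

lemma thJ_nonneg (D j : ℕ) : 0 ≤ thJ D j := by unfold thJ; positivity

def thC (D K j : ℕ) : ℝ := if j ≤ K then thJ D j else 0

def Ew (d n : ℕ) : ℕ := if n = 1 then 0 else d

def aoff (d n : ℕ) : ℕ := if n = 1 then 0 else 2 * d

def aw (d n K l : ℕ) (p : ℕ) : ℝ :=
  if n = 1 then 2 * thC (d * n) K (l - 1) * cpq n p 0 else 2 * thC (d * n) K (l - 2)

def arow (d n K l : ℕ) (j : ℕ) : ℝ :=
  if aoff d n ≤ j ∧ j < aoff d n + d then aw d n K l (j - aoff d n) else 0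

lemma sum_arow_mul (d n K l M : ℕ) (v : ℕ → ℝ) (h : aoff d n + d ≤ M) :
    ∑ j ∈ Finset.range M, arow d n K l j * v j
      = ∑ p ∈ Finset.range d, aw d n K l p * v (aoff d n + p) := by
  set o := aoff d n with ho
  have h1 : Finset.Ico o (o + d) ⊆ Finset.range M := by
    intro j hj
    rw [Finset.mem_Ico] at hj
    exact Finset.mem_range.2 (lt_of_lt_of_le hj.2 h)
  calc ∑ j ∈ Finset.range M, arow d n K l j * v j
      = ∑ j ∈ Finset.Ico o (o + d), arow d n K l j * v j := by
        refine (Finset.sum_subset h1 ?_).symm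
        intro j _ hj
        rw [Finset.mem_Ico] at hj
        unfold arow
        rw [if_neg (by rw [← ho]; omega)]
        ring
    _ = ∑ j ∈ Finset.Ico o (o + d), aw d n K l (j - o) * v j := by
        refine Finset.sum_congr rfl fun j hj => ?_
        rw [Finset.mem_Ico] at hj
        unfold arow
        rw [if_pos (by rw [← ho]; exact hj)]
    _ = ∑ p ∈ Finset.range (o + d - o), aw d n K l (o + p - o) * v (o + p) := by
        rw [Finset.sum_Ico_eq_sum_range]
    _ = ∑ p ∈ Finset.range d, aw d n K l p * v (o + p) := by
        simp [Nat.add_sub_cancel_left]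

def dimsF (d n K : ℕ) : ℕ → ℕ := fun l =>
  if l = 0 then d else if l = K + 3 then 2 * d else 2 * d + Ew d n + 1

def WtF (d n K : ℕ) : ℕ → ℕ → ℕ → ℝ := fun l i =>
  if l = 1 then
    (if i < d then ind i 2 else if i < 2 * d then ind (i - d) 2 else fun _ => 0)
  else if l = K + 3 then
    (if i = 1 then ind (2 * d + Ew d n) 1 else fun _ => 0)
  else if i < d then fun j => ind i (-2) j + ind (d + i) 2 j
  else if i < 2 * d then fun j => ind (i - d) (-2) j + ind i 2 j
  else if i < 2 * d + Ew d n then ind (i - 2 * d) 1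
  else if i = 2 * d + Ew d n then fun j => ind (2 * d + Ew d n) 1 j + arow d n K l j
  else fun _ => 0

def BF (d n K : ℕ) : ℕ → ℕ → ℕ → ℝ := fun l i s =>
  if 2 ≤ l ∧ l ≤ K + 2 ∧ 2 * d ≤ i ∧ i < 2 * d + Ew d n then cpq n (i - 2 * d) s - 1 else 0

def actF (d : ℕ) : ℕ → ℕ → ℝ → ℝ := fun _ i => if i < d then floorF else reluF

lemma thC_nonneg (D K j : ℕ) : 0 ≤ thC D K j := by
  unfold thC; split
  · exact thJ_nonneg D j
  · exact le_refl 0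

lemma sum_ind2_mul (M k1 k2 : ℕ) (a1 a2 : ℝ) (v : ℕ → ℝ) (h1 : k1 < M) (h2 : k2 < M) :
    ∑ j ∈ Finset.range M, (ind k1 a1 j + ind k2 a2 j) * v j = a1 * v k1 + a2 * v k2 := by
  simp only [add_mul, Finset.sum_add_distrib, sum_ind_mul _ _ _ _ h1, sum_ind_mul _ _ _ _ h2]

lemma actF_lt (d l i : ℕ) (h : i < d) : actF d l i = floorF := by
  unfold actF; exact if_pos h

lemma actF_ge (d l i : ℕ) (h : ¬ i < d) : actF d l i = reluF := by
  unfold actF; exact if_neg h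

lemma mulVec1_row_a (d n K M : ℕ) (v : ℕ → ℝ) (p : ℕ) (hp : p < d) (hM : p < M) :
    mulVecN (WtF d n K 1) M v p = 2 * v p := by
  unfold mulVecN
  have hrow : WtF d n K 1 p = ind p 2 := by
    unfold WtF; rw [if_pos rfl, if_pos hp]
  simp only [hrow]
  exact sum_ind_mul M p 2 v hM

lemma mulVec1_row_t (d n K M : ℕ) (v : ℕ → ℝ) (p : ℕ) (hp : p < d) (hM : p < M) :
    mulVecN (WtF d n K 1) M v (d + p) = 2 * v p := by
  unfold mulVecN
  have hrow : WtF d n K 1 (d + p) = ind p 2 := by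
    unfold WtF
    rw [if_pos rfl, if_neg (by omega), if_pos (by omega), Nat.add_sub_cancel_left]
  simp only [hrow]
  exact sum_ind_mul M p 2 v hM

lemma mulVec1_row_z (d n K M : ℕ) (v : ℕ → ℝ) (i : ℕ) (hi : 2 * d ≤ i) :
    mulVecN (WtF d n K 1) M v i = 0 := by
  unfold mulVecN
  have hrow : WtF d n K 1 i = fun _ => 0 := by
    unfold WtF; rw [if_pos rfl, if_neg (by omega), if_neg (by omega)]
  simp only [hrow]
  simp

lemma mulVec_row_a (d n K l M : ℕ) (h1 : l ≠ 1) (h2 : l ≠ K + 3) (v : ℕ → ℝ) (p : ℕ)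
    (hp : p < d) (hM : d + p < M) :
    mulVecN (WtF d n K l) M v p = -2 * v p + 2 * v (d + p) := by
  unfold mulVecN
  have hrow : WtF d n K l p = fun j => ind p (-2) j + ind (d + p) 2 j := by
    unfold WtF; rw [if_neg h1, if_neg h2, if_pos hp]
  simp only [hrow]
  exact sum_ind2_mul M p (d + p) (-2) 2 v (by omega) hM

lemma mulVec_row_t (d n K l M : ℕ) (h1 : l ≠ 1) (h2 : l ≠ K + 3) (v : ℕ → ℝ) (p : ℕ)
    (hp : p < d) (hM : d + p < M) :
    mulVecN (WtF d n K l) M v (d + p) = -2 * v p + 2 * v (d + p) := by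
  unfold mulVecN
  have hrow : WtF d n K l (d + p) = fun j => ind p (-2) j + ind (d + p) 2 j := by
    unfold WtF
    rw [if_neg h1, if_neg h2, if_neg (by omega), if_pos (by omega), Nat.add_sub_cancel_left]
  simp only [hrow]
  exact sum_ind2_mul M p (d + p) (-2) 2 v (by omega) hM

lemma mulVec_row_e (d n K l M : ℕ) (h1 : l ≠ 1) (h2 : l ≠ K + 3) (v : ℕ → ℝ) (p : ℕ)
    (hp : p < Ew d n) (hM : p < M) :
    mulVecN (WtF d n K l) M v (2 * d + p) = v p := by
  unfold mulVecN
  have hrow : WtF d n K l (2 * d + p) = ind p 1 := by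
    unfold WtF
    rw [if_neg h1, if_neg h2, if_neg (by omega), if_neg (by omega), if_pos (by omega),
      Nat.add_sub_cancel_left]
  simp only [hrow]
  rw [sum_ind_mul M p 1 v hM, one_mul]

lemma mulVec_row_A (d n K l M : ℕ) (h1 : l ≠ 1) (h2 : l ≠ K + 3) (v : ℕ → ℝ)
    (hM1 : 2 * d + Ew d n < M) (hM2 : aoff d n + d ≤ M) :
    mulVecN (WtF d n K l) M v (2 * d + Ew d n)
      = v (2 * d + Ew d n) + ∑ p ∈ Finset.range d, aw d n K l p * v (aoff d n + p) := by
  unfold mulVecN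
  have hrow : WtF d n K l (2 * d + Ew d n)
      = fun j => ind (2 * d + Ew d n) 1 j + arow d n K l j := by
    unfold WtF
    rw [if_neg h1, if_neg h2, if_neg (by omega), if_neg (by omega), if_neg (by omega),
      if_pos rfl]
  simp only [hrow]
  simp only [add_mul, Finset.sum_add_distrib]
  rw [sum_ind_mul M _ 1 v hM1, one_mul, sum_arow_mul d n K l M v hM2]

lemma mulVec_out_one (d n K M : ℕ) (v : ℕ → ℝ) (hM : 2 * d + Ew d n < M) :
    mulVecN (WtF d n K (K + 3)) M v 1 = v (2 * d + Ew d n) := by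
  unfold mulVecN
  have hrow : WtF d n K (K + 3) 1 = ind (2 * d + Ew d n) 1 := by
    unfold WtF; rw [if_neg (by omega), if_pos rfl, if_pos rfl]
  simp only [hrow]
  rw [sum_ind_mul M _ 1 v hM, one_mul]

lemma mulVec_out_zero (d n K M : ℕ) (v : ℕ → ℝ) (i : ℕ) (hi : i ≠ 1) :
    mulVecN (WtF d n K (K + 3)) M v i = 0 := by
  unfold mulVecN
  have hrow : WtF d n K (K + 3) i = fun _ => 0 := by
    unfold WtF; rw [if_neg (by omega), if_pos rfl, if_neg hi]
  simp only [hrow]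
  simp

def HL (d n K : ℕ) : ℕ → (ℕ → ℕ → ℝ) → ℕ → ℕ → ℝ :=
  ffBlockLayers (dimsF d n K) (WtF d n K) (BF d n K) (actF d)

lemma HL_succ (d n K l : ℕ) (X : ℕ → ℕ → ℝ) (i s : ℕ) :
    HL d n K (l + 1) X i s
      = actF d (l + 1) i
          (mulVecN (WtF d n K (l + 1)) (dimsF d n K l) (fun t => HL d n K l X t s) i
            + BF d n K (l + 1) i s) := rfl

def AccV (d n K : ℕ) (X : ℕ → ℕ → ℝ) (s l : ℕ) : ℝ :=
  ∑ j ∈ Finset.Icc 1 (min (l - (if n = 1 then 1 else 2)) K),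
    ∑ p ∈ Finset.range d, 2 * thJ (d * n) j * cpq n p s * bdR (X p s) j

lemma AccV_nonneg (d n K : ℕ) (X : ℕ → ℕ → ℝ) (s l : ℕ) : 0 ≤ AccV d n K X s l := by
  refine Finset.sum_nonneg fun j hj => Finset.sum_nonneg fun p _ => ?_
  have hj1 : 1 ≤ j := (Finset.mem_Icc.1 hj).1
  have := thJ_nonneg (d * n) j
  have := cpq_nonneg n p s
  have := bdR_nonneg (X p s) j hj1
  positivity

lemma AccV_one (d n K : ℕ) (X : ℕ → ℕ → ℝ) (s : ℕ) : AccV d n K X s 1 = 0 := by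
  unfold AccV
  have h : min (1 - (if n = 1 then 1 else 2)) K = 0 := by split <;> omega
  rw [h]
  simp

lemma AccV_le2 (d n K : ℕ) (X : ℕ → ℕ → ℝ) (s : ℕ) (hn1 : n ≠ 1) (l : ℕ) (hl : l ≤ 2) :
    AccV d n K X s l = 0 := by
  unfold AccV
  rw [if_neg hn1, show l - 2 = 0 from by omega]
  simp

lemma AccV_succ1 (d n K : ℕ) (X : ℕ → ℕ → ℝ) (s : ℕ) (hn1 : n = 1) (m : ℕ) (h2 : m ≤ K) :
    AccV d n K X s (m + 1 + 1) = AccV d n K X s (m + 1)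
      + ∑ p ∈ Finset.range d, 2 * thC (d * n) K (m + 1) * cpq n p s * bdR (X p s) (m + 1) := by
  unfold AccV
  simp only [if_pos hn1]
  rw [show m + 1 + 1 - 1 = m + 1 from rfl, show m + 1 - 1 = m from rfl]
  by_cases hK1 : m + 1 ≤ K
  · rw [min_eq_left hK1, min_eq_left (by omega), Finset.sum_Icc_succ_top (by omega)]
    congr 1
    refine Finset.sum_congr rfl fun p _ => ?_
    unfold thC
    rw [if_pos hK1]
  · rw [min_eq_right (by omega), min_eq_right (by omega)]
    have hz : ∑ p ∈ Finset.range d,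
        2 * thC (d * n) K (m + 1) * cpq n p s * bdR (X p s) (m + 1) = 0 := by
      refine Finset.sum_eq_zero fun p _ => ?_
      unfold thC
      rw [if_neg (by omega)]
      ring
    rw [hz, add_zero]

lemma AccV_succ2 (d n K : ℕ) (X : ℕ → ℕ → ℝ) (s : ℕ) (hn1 : n ≠ 1) (k : ℕ) (h2 : k + 1 ≤ K) :
    AccV d n K X s (k + 1 + 1 + 1) = AccV d n K X s (k + 1 + 1)
      + ∑ p ∈ Finset.range d, 2 * thC (d * n) K (k + 1) * cpq n p s * bdR (X p s) (k + 1) := by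
  unfold AccV
  simp only [if_neg hn1]
  rw [show k + 1 + 1 + 1 - 2 = k + 1 from rfl, show k + 1 + 1 - 2 = k from rfl]
  rw [min_eq_left h2, min_eq_left (by omega), Finset.sum_Icc_succ_top (by omega)]
  congr 1
  refine Finset.sum_congr rfl fun p _ => ?_
  unfold thC
  rw [if_pos h2]

lemma AccV_final (d n K : ℕ) (hK : 1 ≤ K) (X : ℕ → ℕ → ℝ) (s : ℕ) :
    AccV d n K X s (K + 2)
      = ∑ p ∈ Finset.range d, cpq n p s * phiK (d * n) K (X p s) := by
  unfold AccV
  have hm : min ((K + 2) - (if n = 1 then 1 else 2)) K = K := by split <;> omega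
  rw [hm, Finset.sum_comm]
  refine Finset.sum_congr rfl fun p _ => ?_
  unfold phiK
  rw [Finset.mul_sum]
  refine Finset.sum_congr rfl fun j _ => ?_
  unfold thJ cpq bdR
  ring

lemma layers_spec (d n K : ℕ) (hd : 1 ≤ d) (hK : 1 ≤ K)
    (X : ℕ → ℕ → ℝ) (s : ℕ) (hs : s < n)
    (hX : ∀ p, p < d → X p s ∈ Set.Ico (0:ℝ) 1) :
    ∀ l, 1 ≤ l → l ≤ K + 2 →
      (∀ p, p < d → HL d n K l X p s = bdR (X p s) l) ∧
      (∀ p, p < d → HL d n K l X (d + p) s = 2 * Int.fract ((2:ℝ) ^ (l - 1) * X p s)) ∧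
      (∀ p, p < Ew d n → HL d n K l X (2 * d + p) s
          = if l = 1 then 0 else cpq n p s * bdR (X p s) (l - 1)) ∧
      HL d n K l X (2 * d + Ew d n) s = AccV d n K X s l := by
  intro l
  induction l with
  | zero => omega
  | succ m IH =>
    intro _ hl2
    rcases Nat.eq_zero_or_pos m with rfl | hm
    · -- base layer 1
      have hd0 : dimsF d n K 0 = d := by unfold dimsF; rw [if_pos rfl]
      have h0 : ∀ t, HL d n K 0 X t s = X t s := fun t => rfl
      refine ⟨?_, ?_, ?_, ?_⟩
      · intro p hp
        rw [HL_succ]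
        simp only [Nat.zero_add]
        rw [hd0, mulVec1_row_a d n K d _ p hp hp]
        simp only [h0]
        rw [show BF d n K 1 p s = 0 from by unfold BF; rw [if_neg (by omega)], add_zero,
          actF_lt d 1 p hp]
        have hb := binDigit_succ (X p s) 0
        rw [pow_zero, one_mul, Int.fract_eq_self.2 ⟨(hX p hp).1, (hX p hp).2⟩] at hb
        simp only [Nat.zero_add] at hb
        unfold floorF bdR
        rw [hb]
      · intro p hp
        rw [HL_succ]
        simp only [Nat.zero_add]
        rw [hd0, mulVec1_row_t d n K d _ p hp hp]
        simp only [h0]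
        rw [show BF d n K 1 (d + p) s = 0 from by unfold BF; rw [if_neg (by omega)], add_zero,
          actF_ge d 1 (d + p) (by omega)]
        rw [relu_of_nonneg (by have := (hX p hp).1; linarith)]
        rw [show (1:ℕ) - 1 = 0 from rfl, pow_zero, one_mul,
          Int.fract_eq_self.2 ⟨(hX p hp).1, (hX p hp).2⟩]
      · intro p hp
        rw [HL_succ]
        simp only [Nat.zero_add]
        rw [hd0, mulVec1_row_z d n K d _ (2 * d + p) (by omega)]
        rw [show BF d n K 1 (2 * d + p) s = 0 from by unfold BF; rw [if_neg (by omega)],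
          add_zero, actF_ge d 1 (2 * d + p) (by omega)]
        simp [reluF]
      · rw [HL_succ]
        simp only [Nat.zero_add]
        rw [hd0, mulVec1_row_z d n K d _ (2 * d + Ew d n) (by omega)]
        rw [show BF d n K 1 (2 * d + Ew d n) s = 0 from by unfold BF; rw [if_neg (by omega)],
          add_zero, actF_ge d 1 (2 * d + Ew d n) (by omega), AccV_one]
        simp [reluF]
    · -- inductive layer m + 1 with 1 ≤ m
      obtain ⟨m', rfl⟩ : ∃ m', m = m' + 1 := ⟨m - 1, by omega⟩
      obtain ⟨ih1, ih2, ih3, ih4⟩ := IH (by omega) (by omega)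
      have hdm : dimsF d n K (m' + 1) = 2 * d + Ew d n + 1 := by
        unfold dimsF; rw [if_neg (by omega), if_neg (by omega)]
      have hEle : Ew d n ≤ d := by unfold Ew; split <;> omega
      have hao_le : aoff d n + d ≤ 2 * d + Ew d n + 1 := by
        unfold aoff Ew
        by_cases h : n = 1
        · rw [if_pos h, if_pos h]; omega
        · rw [if_neg h, if_neg h]; omega
      refine ⟨?_, ?_, ?_, ?_⟩
      · intro p hp
        rw [HL_succ, hdm,
          mulVec_row_a d n K (m' + 1 + 1) (2 * d + Ew d n + 1) (by omega) (by omega) _ p hp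
            (by omega)]
        simp only [ih1 p hp, ih2 p hp]
        rw [show BF d n K (m' + 1 + 1) p s = 0 from by unfold BF; rw [if_neg (by omega)],
          add_zero, actF_lt d _ p hp, show m' + 1 - 1 = m' from rfl]
        have key : -2 * bdR (X p s) (m' + 1)
            + 2 * (2 * Int.fract ((2:ℝ) ^ m' * X p s))
            = 2 * Int.fract ((2:ℝ) ^ (m' + 1) * X p s) := by
          rw [fract_succ' (X p s) m']; ring
        rw [key]
        unfold floorF bdR
        rw [binDigit_succ (X p s) (m' + 1)]
      · intro p hp
        rw [HL_succ, hdm,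
          mulVec_row_t d n K (m' + 1 + 1) (2 * d + Ew d n + 1) (by omega) (by omega) _ p hp
            (by omega)]
        simp only [ih1 p hp, ih2 p hp]
        rw [show BF d n K (m' + 1 + 1) (d + p) s = 0 from by unfold BF; rw [if_neg (by omega)],
          add_zero, actF_ge d _ (d + p) (by omega), show m' + 1 - 1 = m' from rfl]
        have key : -2 * bdR (X p s) (m' + 1)
            + 2 * (2 * Int.fract ((2:ℝ) ^ m' * X p s))
            = 2 * Int.fract ((2:ℝ) ^ (m' + 1) * X p s) := by
          rw [fract_succ' (X p s) m']; ring
        rw [key, relu_of_nonneg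
          (by have := Int.fract_nonneg ((2:ℝ) ^ (m' + 1) * X p s); linarith),
          show m' + 1 + 1 - 1 = m' + 1 from rfl]
      · intro p hp
        have hpd : p < d := lt_of_lt_of_le hp hEle
        rw [HL_succ, hdm,
          mulVec_row_e d n K (m' + 1 + 1) (2 * d + Ew d n + 1) (by omega) (by omega) _ p hp
            (by omega)]
        simp only [ih1 p hpd]
        rw [show BF d n K (m' + 1 + 1) (2 * d + p) s = cpq n p s - 1 from by
            unfold BF
            rw [if_pos ⟨by omega, by omega, by omega, by omega⟩, Nat.add_sub_cancel_left],
          actF_ge d _ (2 * d + p) (by omega), if_neg (by omega),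
          show m' + 1 + 1 - 1 = m' + 1 from rfl]
        rcases bd01 (X p s) (m' + 1) (by omega) with h | h
        · rw [h, zero_add, mul_zero]
          unfold reluF
          rw [max_eq_right (by have := cpq_le_one n p s; linarith)]
        · rw [h, mul_one, show (1:ℝ) + (cpq n p s - 1) = cpq n p s from by ring,
            relu_of_nonneg (cpq_nonneg n p s)]
      · rw [HL_succ, hdm,
          mulVec_row_A d n K (m' + 1 + 1) (2 * d + Ew d n + 1) (by omega) (by omega) _
            (by omega) hao_le]
        simp only [ih4]
        rw [show BF d n K (m' + 1 + 1) (2 * d + Ew d n) s = 0 from by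
            unfold BF; rw [if_neg (by omega)],
          add_zero, actF_ge d _ (2 * d + Ew d n) (by omega)]
        by_cases hn1 : n = 1
        · have hs0 : s = 0 := by omega
          subst hs0
          have hao0 : aoff d n = 0 := by unfold aoff; rw [if_pos hn1]
          have hT : ∑ p ∈ Finset.range d,
                aw d n K (m' + 1 + 1) p * (fun t => HL d n K (m' + 1) X t 0) (aoff d n + p)
              = ∑ p ∈ Finset.range d,
                2 * thC (d * n) K (m' + 1) * cpq n p 0 * bdR (X p 0) (m' + 1) := by
            refine Finset.sum_congr rfl fun p hp' => ?_
            have hpd := Finset.mem_range.1 hp'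
            rw [hao0]
            simp only [Nat.zero_add, ih1 p hpd]
            unfold aw
            rw [if_pos hn1]
            try norm_num
          rw [hT, AccV_succ1 d n K X 0 hn1 m' (by omega)]
          refine relu_of_nonneg (add_nonneg (AccV_nonneg _ _ _ _ _ _)
            (Finset.sum_nonneg fun p _ => ?_))
          exact mul_nonneg (mul_nonneg (mul_nonneg (by norm_num) (thC_nonneg _ _ _))
            (cpq_nonneg n p 0)) (bdR_nonneg (X p 0) (m' + 1) (by omega))
        · have hEd : Ew d n = d := by unfold Ew; rw [if_neg hn1]
          have hao2 : aoff d n = 2 * d := by unfold aoff; rw [if_neg hn1]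
          have hT : ∑ p ∈ Finset.range d,
                aw d n K (m' + 1 + 1) p * (fun t => HL d n K (m' + 1) X t s) (aoff d n + p)
              = ∑ p ∈ Finset.range d, (if m' + 1 = 1 then (0:ℝ)
                  else 2 * thC (d * n) K m' * cpq n p s * bdR (X p s) m') := by
            refine Finset.sum_congr rfl fun p hp' => ?_
            have hpd := Finset.mem_range.1 hp'
            rw [hao2]
            simp only [ih3 p (by omega)]
            unfold aw
            rw [if_neg hn1, show m' + 1 + 1 - 2 = m' from rfl]
            by_cases h1 : m' + 1 = 1
            · rw [if_pos h1, if_pos h1, mul_zero]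
            · rw [if_neg h1, if_neg h1, show m' + 1 - 1 = m' from rfl]
              ring
          rw [hT]
          by_cases h1 : m' = 0
          · subst h1
            rw [AccV_le2 d n K X s hn1 (0+1+1) (by omega), AccV_le2 d n K X s hn1 (0+1) (by omega)]
            simp [reluF]
          · obtain ⟨k, rfl⟩ : ∃ k, m' = k + 1 := ⟨m' - 1, by omega⟩
            rw [Finset.sum_congr rfl fun p _ => if_neg (by omega),
              AccV_succ2 d n K X s hn1 k (by omega)]
            refine relu_of_nonneg (add_nonneg (AccV_nonneg _ _ _ _ _ _)
              (Finset.sum_nonneg fun p _ => ?_))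
            exact mul_nonneg (mul_nonneg (mul_nonneg (by norm_num) (thC_nonneg _ _ _))
              (cpq_nonneg n p s)) (bdR_nonneg (X p s) (k + 1) (by omega))

/-- The source feedforward block. -/
def FsrF (d n K : ℕ) : (ℕ → ℕ → ℝ) → ℕ → ℕ → ℝ := fun X i s =>
  mulVecN (WtF d n K (K + 3)) (dimsF d n K (K + 2))
    (fun t => HL d n K (K + 2) X t s) i

/-- Attention matrices. -/
def WOc (n : ℕ) : ℕ → ℕ → ℝ := fun i t => if i = 0 ∧ t = 0 then (n:ℝ) else 0
def WVc : ℕ → ℕ → ℝ := fun u j => if u = 0 ∧ j = 1 then 1 else 0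

/-- The self-attention layer. -/
def FSAF (d n : ℕ) : (ℕ → ℕ → ℝ) → ℕ → ℕ → ℝ := fun X i j =>
  X i j + matMulN (matMulN (WOc n) 1 WVc) (2 * d)
    (matMulN X n (fun a b =>
      Real.exp (∑ u ∈ Finset.range 1,
          matMulN (fun _ _ => (0:ℝ)) (2 * d) X u a * matMulN (fun _ _ => (0:ℝ)) (2 * d) X u b) /
        ∑ t ∈ Finset.range n,
          Real.exp (∑ u ∈ Finset.range 1,
            matMulN (fun _ _ => (0:ℝ)) (2 * d) X u t
              * matMulN (fun _ _ => (0:ℝ)) (2 * d) X u b))) i j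

/-- The final affine map. -/
def AffF (d n K : ℕ) : (ℕ → ℕ → ℝ) → ℕ → ℕ → ℝ := fun Y i s =>
  mulVecN (fun _ => ind 0 ((3:ℝ) ^ (K * d * n + 1))) (2 * d) (fun t => Y t s) i
    + (1 + (s:ℝ) * (3:ℝ) ^ (K * d * n))

lemma FsrF_zero (d n K : ℕ) (X : ℕ → ℕ → ℝ) (s : ℕ) : FsrF d n K X 0 s = 0 := by
  unfold FsrF
  exact mulVec_out_zero d n K _ _ 0 (by omega)

lemma FsrF_one (d n K : ℕ) (hd : 1 ≤ d) (hK : 1 ≤ K) (X : ℕ → ℕ → ℝ) (s : ℕ) (hs : s < n)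
    (hX : ∀ p, p < d → X p s ∈ Set.Ico (0:ℝ) 1) :
    FsrF d n K X 1 s = AccV d n K X s (K + 2) := by
  unfold FsrF
  have hdK : dimsF d n K (K + 2) = 2 * d + Ew d n + 1 := by
    unfold dimsF; rw [if_neg (by omega), if_neg (by omega)]
  rw [hdK, mulVec_out_one d n K _ _ (by omega)]
  exact (layers_spec d n K hd hK X s hs hX (K + 2) (by omega) (by omega)).2.2.2

lemma FSAF_eval0 (d n : ℕ) (hd : 1 ≤ d) (hn : 1 ≤ n) (Y : ℕ → ℕ → ℝ) (j : ℕ) :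
    FSAF d n Y 0 j = Y 0 j + ∑ a ∈ Finset.range n, Y 1 a := by
  have hn0 : (n:ℝ) ≠ 0 := Nat.cast_ne_zero.2 (by omega)
  unfold FSAF
  congr 1
  have hz : ∀ (u a : ℕ), matMulN (fun _ _ => (0:ℝ)) (2 * d) Y u a = 0 := by
    intro u a; unfold matMulN; simp
  have hwfun : (fun a b => Real.exp (∑ u ∈ Finset.range 1,
          matMulN (fun _ _ => (0:ℝ)) (2 * d) Y u a * matMulN (fun _ _ => (0:ℝ)) (2 * d) Y u b) /
        ∑ t ∈ Finset.range n,
          Real.exp (∑ u ∈ Finset.range 1,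
            matMulN (fun _ _ => (0:ℝ)) (2 * d) Y u t
              * matMulN (fun _ _ => (0:ℝ)) (2 * d) Y u b))
      = fun _ _ : ℕ => (n:ℝ)⁻¹ := by
    funext a b
    simp [hz, Real.exp_zero, one_div]
  rw [hwfun]
  have hM : ∀ t, matMulN (WOc n) 1 WVc 0 t = ind 1 (n:ℝ) t := by
    intro t
    unfold matMulN WOc WVc ind
    rw [Finset.sum_range_one]
    by_cases h : t = 1 <;> simp [h]
  rw [show matMulN (matMulN (WOc n) 1 WVc) (2 * d) (matMulN Y n fun _ _ => (n:ℝ)⁻¹) 0 j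
      = ∑ t ∈ Finset.range (2 * d),
          matMulN (WOc n) 1 WVc 0 t * matMulN Y n (fun _ _ => (n:ℝ)⁻¹) t j from rfl]
  rw [Finset.sum_congr rfl fun t _ => by rw [hM t]]
  rw [sum_ind_mul (2 * d) 1 (n:ℝ) _ (by omega)]
  rw [show matMulN Y n (fun _ _ => (n:ℝ)⁻¹) 1 j = ∑ a ∈ Finset.range n, Y 1 a * (n:ℝ)⁻¹ from rfl]
  rw [← Finset.sum_mul, mul_comm ((n:ℝ)) _, mul_assoc, inv_mul_cancel₀ hn0, mul_one]

theorem stmt5 (d n K : ℕ) (hd : 1 ≤ d) (hn : 1 ≤ n) (hK : 1 ≤ K) :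
    ∃ Fsr FSA Aff : (ℕ → ℕ → ℝ) → ℕ → ℕ → ℝ,
      IsFFBlock d (2 * d) (K + 3) (3 * d * n) {reluF, floorF} Fsr ∧
      IsSelfAttn (2 * d) n FSA ∧
      IsAffineM (2 * d) Aff ∧
      ∀ X : Fin d → Fin n → ℝ, (∀ i j, X i j ∈ Set.Ico (0:ℝ) 1) →
        ∀ (r : Fin d) (s : Fin n),
          Aff (FSA (Fsr (embedM X))) (r : ℕ) (s : ℕ) = innerZ d n K X s := by
  refine ⟨FsrF d n K, FSAF d n, AffF d n K, ?_, ?_, ?_, ?_⟩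
  · -- IsFFBlock
    refine ⟨dimsF d n K, WtF d n K, BF d n K, actF d, ?_, ?_, ?_, ?_, fun X i s => rfl⟩
    · unfold dimsF; rw [if_pos rfl]
    · unfold dimsF; rw [if_neg (by omega), if_pos rfl]
    · intro l h0 hL
      unfold dimsF
      rw [if_neg (by omega), if_neg (by omega)]
      unfold Ew
      by_cases h : n = 1
      · rw [if_pos h]; subst h; omega
      · rw [if_neg h]
        have h2 : 2 ≤ n := by omega
        have h3 : 3 * d * 2 ≤ 3 * d * n := Nat.mul_le_mul_left (3 * d) h2
        omega
    · intro l i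
      unfold actF
      split
      · exact Set.mem_insert_of_mem _ rfl
      · exact Set.mem_insert _ _
  · exact ⟨1, WOc n, WVc, fun _ _ => 0, fun _ _ => 0, fun X i j => rfl⟩
  · exact ⟨fun _ => ind 0 ((3:ℝ) ^ (K * d * n + 1)), fun _ s => 1 + (s:ℝ) * (3:ℝ) ^ (K * d * n),
      fun Y i s => rfl⟩
  · intro X hX r s
    have hcol : ∀ a, a < n → ∀ p, p < d → embedM X p a ∈ Set.Ico (0:ℝ) 1 := by
      intro a ha p hp
      unfold embedM
      rw [dif_pos ⟨hp, ha⟩]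
      exact hX _ _
    unfold AffF
    rw [show mulVecN (fun _ => ind 0 ((3:ℝ) ^ (K * d * n + 1))) (2 * d)
          (fun t => FSAF d n (FsrF d n K (embedM X)) t (s : ℕ)) (r : ℕ)
        = ∑ t ∈ Finset.range (2 * d),
            ind 0 ((3:ℝ) ^ (K * d * n + 1)) t * FSAF d n (FsrF d n K (embedM X)) t (s : ℕ)
        from rfl]
    rw [sum_ind_mul (2 * d) 0 _ _ (by omega)]
    rw [FSAF_eval0 d n hd hn _ (s : ℕ), FsrF_zero, zero_add]
    have hsum : ∀ a ∈ Finset.range n, FsrF d n K (embedM X) 1 a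
        = ∑ p ∈ Finset.range d, cpq n p a * phiK (d * n) K (embedM X p a) := by
      intro a ha
      rw [FsrF_one d n K hd hK _ a (Finset.mem_range.1 ha) (hcol a (Finset.mem_range.1 ha)),
        AccV_final d n K hK]
    rw [Finset.sum_congr rfl hsum]
    have hfin : ∑ a ∈ Finset.range n, ∑ p ∈ Finset.range d,
          cpq n p a * phiK (d * n) K (embedM X p a)
        = ∑ q : Fin n, ∑ p : Fin d,
            ((3:ℝ) ^ ((p : ℕ) * n + (q : ℕ) + 1))⁻¹ * phiK (d * n) K (X p q) := by
      rw [← Fin.sum_univ_eq_sum_range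
        (fun a => ∑ p ∈ Finset.range d, cpq n p a * phiK (d * n) K (embedM X p a)) n]
      refine Finset.sum_congr rfl fun q _ => ?_
      rw [← Fin.sum_univ_eq_sum_range
        (fun p => cpq n p (q : ℕ) * phiK (d * n) K (embedM X p (q : ℕ))) d]
      refine Finset.sum_congr rfl fun p _ => ?_
      unfold cpq embedM
      rw [dif_pos ⟨p.isLt, q.isLt⟩]
    rw [hfin]
    unfold innerZ
    ring

end
end

section
/- Let d, n, K ∈ ℕ with d, n, K ≥ 1, let β ∈ (0,1] and p ∈ [1,∞). There exist a Lebesgue-measurable set Ω ⊆ [0,1] with Lebesgue measure at most 2^{−Kβp} and a feedforward network f : ℝ → ℝ of depth 2K and width 4n with ReLU activation such that for every q ∈ {0, 1, …, n−1} and every x ∈ [2q, 2q+1] with x − 2q ∉ Ω, f(x) = 3^{1−q}·φ_K(x − 2q) + 9/2 − (1/2)·3^{2−q}. -/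
open Finset Real Set MeasureTheory

noncomputable section

namespace S9
lemma reluF_of_nonneg {x : ℝ} (h : 0 ≤ x) : reluF x = x := max_eq_left h
lemma reluF_of_nonpos {x : ℝ} (h : x ≤ 0) : reluF x = 0 := max_eq_right h
lemma reluF_nonneg (x : ℝ) : 0 ≤ reluF x := le_max_right _ _
lemma reluF_relu (x : ℝ) : reluF (reluF x) = reluF x := reluF_of_nonneg (reluF_nonneg x)

/-- clamp to `[0,1]` -/
def cl (x : ℝ) : ℝ := reluF x - reluF (x - 1)

lemma cl_of_nonpos {x : ℝ} (h : x ≤ 0) : cl x = 0 := by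
  simp [cl, reluF_of_nonpos h, reluF_of_nonpos (by linarith : x - 1 ≤ 0)]
lemma cl_of_one_le {x : ℝ} (h : 1 ≤ x) : cl x = 1 := by
  rw [cl, reluF_of_nonneg (by linarith), reluF_of_nonneg (by linarith)]; ring
lemma cl_of_mem {x : ℝ} (h0 : 0 ≤ x) (h1 : x ≤ 1) : cl x = x := by
  rw [cl, reluF_of_nonneg h0, reluF_of_nonpos (by linarith)]; ring
lemma cl_nonneg (x : ℝ) : 0 ≤ cl x := by
  rcases le_or_gt x 0 with h | h
  · rw [cl_of_nonpos h]
  rcases le_or_gt x 1 with h1 | h1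
  · rw [cl_of_mem h.le h1]; exact h.le
  · rw [cl_of_one_le h1.le]; norm_num

/-- soft bit extractor -/
def bit (δ y : ℝ) : ℝ := cl ((y - 2⁻¹) / δ + 1)

lemma bit_zero {δ y : ℝ} (hδ : 0 < δ) (h : y ≤ 2⁻¹ - δ) : bit δ y = 0 := by
  apply cl_of_nonpos
  have h2 : (y - 2⁻¹) / δ ≤ -1 := by
    rw [div_le_iff₀ hδ]; linarith
  linarith
lemma bit_one {δ y : ℝ} (hδ : 0 < δ) (h : (2⁻¹:ℝ) ≤ y) : bit δ y = 1 := by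
  apply cl_of_one_le
  have h2 : (0:ℝ) ≤ (y - 2⁻¹) / δ := div_nonneg (by linarith) hδ.le
  linarith
lemma bit_nonneg (δ y : ℝ) : 0 ≤ bit δ y := cl_nonneg _
lemma bit_cl {δ t : ℝ} (hδ : 0 < δ) (hδ2 : δ ≤ 2⁻¹) : bit δ t = bit δ (cl t) := by
  rcases le_or_gt t 0 with h | h
  · rw [cl_of_nonpos h, bit_zero hδ (by linarith), bit_zero hδ (by linarith)]
  rcases le_or_gt 1 t with h1 | h1
  · rw [cl_of_one_le h1, bit_one hδ (by linarith), bit_one hδ (by norm_num)]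
  · rw [cl_of_mem h.le h1.le]

lemma bit_fract {δ u : ℝ} (hδ : 0 < δ)
    (h : Int.fract u ∉ Set.Ioo (2⁻¹ - δ) (2⁻¹ : ℝ)) :
    bit δ (Int.fract u) = ((⌊2 * Int.fract u⌋ : ℤ) : ℝ) := by
  have h0 := Int.fract_nonneg u
  have h1 := Int.fract_lt_one u
  rcases le_or_gt (2⁻¹:ℝ) (Int.fract u) with hy | hy
  · rw [bit_one hδ hy]
    have hf : ⌊2 * Int.fract u⌋ = 1 := by
      rw [Int.floor_eq_iff]
      constructor
      · push_cast; linarith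
      · push_cast; linarith
    rw [hf]; norm_num
  · have hy' : Int.fract u ≤ 2⁻¹ - δ := by
      by_contra hc
      exact h ⟨lt_of_not_ge hc, hy⟩
    rw [bit_zero hδ hy']
    have hf : ⌊2 * Int.fract u⌋ = 0 := by
      rw [Int.floor_eq_zero_iff]
      exact ⟨by linarith, by linarith⟩
    rw [hf]; norm_num

lemma fract_double (u : ℝ) :
    Int.fract (2 * u) = 2 * Int.fract u - ↑⌊2 * Int.fract u⌋ := by
  have h : (2:ℝ) * u = 2 * Int.fract u + ((2 * ⌊u⌋ : ℤ) : ℝ) := by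
    rw [Int.fract]; push_cast; ring
  rw [h, Int.fract_add_intCast, Int.fract]
end S9

namespace S9
/-- coefficient `c_j = 2·3^{-(1+D(j-1))}` -/
def cc (D j : ℕ) : ℝ := 2 * ((3:ℝ) ^ (1 + D * (j - 1)))⁻¹
lemma cc_nonneg (D j : ℕ) : 0 ≤ cc D j := by
  unfold cc; positivity
/-- `S = Σ_{j=1}^K c_j` -/
def SS (D K : ℕ) : ℝ := ∑ j ∈ Finset.Icc 1 K, cc D j

/-- spec remainder sequence: `ys j = Y_{j+1}` -/
def ys (δ t : ℝ) : ℕ → ℝ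
  | 0 => cl t
  | j + 1 => reluF (2 * ys δ t j - bit δ (ys δ t j))

/-- spec accumulator sequence -/
def ssq (δ : ℝ) (D : ℕ) (t : ℝ) : ℕ → ℝ
  | 0 => 0
  | j + 1 => reluF (ssq δ D t j + cc D (j + 1) * bit δ (ys δ t j))

lemma ys_nonneg (δ t : ℝ) (j : ℕ) : 0 ≤ ys δ t j := by
  cases j with
  | zero => exact cl_nonneg t
  | succ j => exact reluF_nonneg _
lemma ssq_nonneg (δ : ℝ) (D : ℕ) (t : ℝ) (j : ℕ) : 0 ≤ ssq δ D t j := by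
  cases j with
  | zero => exact le_refl 0
  | succ j => exact reluF_nonneg _

lemma ys_neg {δ t : ℝ} (hδ : 0 < δ) (hδ2 : δ ≤ 2⁻¹) (ht : t ≤ 0) :
    ∀ j, ys δ t j = 0 := by
  intro j
  induction j with
  | zero => exact cl_of_nonpos ht
  | succ j ih =>
      rw [ys, ih, bit_zero hδ (by linarith)]
      simpa using reluF_of_nonpos (le_refl 0)
lemma ssq_neg {δ t : ℝ} (hδ : 0 < δ) (hδ2 : δ ≤ 2⁻¹) (ht : t ≤ 0) (D : ℕ) :
    ∀ j, ssq δ D t j = 0 := by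
  intro j
  induction j with
  | zero => rfl
  | succ j ih =>
      rw [ssq, ih, ys_neg hδ hδ2 ht, bit_zero hδ (by linarith)]
      simpa using reluF_of_nonpos (le_refl 0)

lemma ys_one {δ t : ℝ} (hδ : 0 < δ) (ht : 1 ≤ t) :
    ∀ j, ys δ t j = 1 := by
  intro j
  induction j with
  | zero => exact cl_of_one_le ht
  | succ j ih =>
      rw [ys, ih, bit_one hδ (by norm_num)]
      rw [show (2:ℝ) * 1 - 1 = 1 by ring, reluF_of_nonneg (by norm_num)]
lemma ssq_one {δ t : ℝ} (hδ : 0 < δ) (ht : 1 ≤ t) (D : ℕ) :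
    ∀ j, ssq δ D t j = ∑ i ∈ Finset.Icc 1 j, cc D i := by
  intro j
  induction j with
  | zero => simp [ssq]
  | succ j ih =>
      rw [ssq, ih, ys_one hδ ht, bit_one hδ (by norm_num), mul_one,
        ← Finset.sum_Icc_succ_top (by omega : 1 ≤ j + 1)]
      exact reluF_of_nonneg (Finset.sum_nonneg fun i _ => cc_nonneg D i)

lemma binDigit_succ (t : ℝ) (j : ℕ) :
    binDigit t (j + 1) = ⌊2 * Int.fract ((2:ℝ) ^ j * t)⌋ := by
  have h : 2 * Int.fract ((2:ℝ) ^ j * t)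
      = 2 * ((2:ℝ) ^ j * t) - ((2 * ⌊(2:ℝ) ^ j * t⌋ : ℤ) : ℝ) := by
    rw [Int.fract]; push_cast; ring
  rw [h, Int.floor_sub_intCast, binDigit]
  rw [show (2:ℝ) * ((2:ℝ) ^ j * t) = (2:ℝ) ^ (j + 1) * t by ring]
  rw [show j + 1 - 1 = j from rfl]

lemma ys_fract {δ t : ℝ} (hδ : 0 < δ) {K : ℕ}
    (h0 : 0 ≤ t) (h1 : t < 1)
    (hg : ∀ i < K, Int.fract ((2:ℝ) ^ i * t) ∉ Set.Ioo (2⁻¹ - δ) (2⁻¹:ℝ)) :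
    ∀ j ≤ K, ys δ t j = Int.fract ((2:ℝ) ^ j * t) := by
  intro j
  induction j with
  | zero =>
      intro _
      rw [ys, cl_of_mem h0 h1.le]
      rw [show ((2:ℝ) ^ 0 * t) = t by ring, Int.fract_eq_self.2 ⟨h0, h1⟩]
  | succ j ih =>
      intro hj
      have hjK : j < K := by omega
      rw [ys, ih (by omega), bit_fract hδ (hg j hjK)]
      have hfl : (↑⌊2 * Int.fract ((2:ℝ) ^ j * t)⌋ : ℝ) ≤ 2 * Int.fract ((2:ℝ) ^ j * t) :=
        Int.floor_le _
      rw [reluF_of_nonneg (by linarith)]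
      rw [show (2:ℝ) ^ (j + 1) * t = 2 * ((2:ℝ) ^ j * t) by ring, fract_double]

lemma ssq_fract {δ t : ℝ} (hδ : 0 < δ) {K : ℕ} (D : ℕ)
    (h0 : 0 ≤ t) (h1 : t < 1)
    (hg : ∀ i < K, Int.fract ((2:ℝ) ^ i * t) ∉ Set.Ioo (2⁻¹ - δ) (2⁻¹:ℝ)) :
    ∀ j ≤ K, ssq δ D t j = ∑ i ∈ Finset.Icc 1 j, cc D i * ((binDigit t i : ℤ) : ℝ) := by
  intro j
  induction j with
  | zero => simp [ssq]
  | succ j ih =>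
      intro hj
      have hjK : j < K := by omega
      rw [ssq, ih (by omega), ys_fract hδ h0 h1 hg j (by omega), bit_fract hδ (hg j hjK),
        ← binDigit_succ]
      have harg : 0 ≤ ssq δ D t j + cc D (j + 1) * bit δ (ys δ t j) := by
        have := ssq_nonneg δ D t j
        have := cc_nonneg D (j + 1)
        have := bit_nonneg δ (ys δ t j)
        positivity
      rw [ys_fract hδ h0 h1 hg j (by omega), bit_fract hδ (hg j hjK), ← binDigit_succ,
        ih (by omega)] at harg
      rw [reluF_of_nonneg harg, Finset.sum_Icc_succ_top (by omega : 1 ≤ j + 1)]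
end S9

namespace S9
/-- output-layer weights per channel -/
def outw (D K : ℕ) (r : ℕ) : ℝ :=
  if r = 0 then 1 - SS D K
  else if r = 1 then (if K = 1 then -(1 - SS D K) else 1)
  else if r = 2 then cc D K
  else -(cc D K)

/-- block weight pattern of hidden layers `2 ≤ l ≤ 2K-1` -/
def pat (δ ε : ℝ) (D K : ℕ) (l r r' : ℕ) : ℝ :=
  if l % 2 = 0 then
    if r = 0 then
      (if r' = 0 then 2 else if r' = 1 then (if l = 2 then -2 else 0)
       else if r' = 2 then -1 else 1)
    else if r = 1 then
      (if r' = 1 then (if l = 2 then 0 else 1)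
       else if r' = 2 then cc D (l / 2)
       else if r' = 3 then -(cc D (l / 2)) else 0)
    else 0
  else
    if r = 0 then (if r' = 0 then (if l = 2 * K - 1 then ε⁻¹ else 1) else 0)
    else if r = 1 then (if r' = 1 then 1 else 0)
    else (if r' = 0 then δ⁻¹ else 0)

def Wnet (δ ε : ℝ) (D K : ℕ) (l i j : ℕ) : ℝ :=
  if l = 1 then (if i % 4 ≤ 1 then 1 else δ⁻¹)
  else if l = 2 * K then (3:ℝ) ^ ((1:ℤ) - ((j / 4 : ℕ) : ℤ)) * outw D K (j % 4)
  else if j / 4 = i / 4 then pat δ ε D K l (i % 4) (j % 4) else 0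

def bnet (δ ε : ℝ) (K : ℕ) (l i : ℕ) : ℝ :=
  if l = 1 then
    (if i % 4 = 0 then -(2 * ((i / 4 : ℕ) : ℝ)) - (if K = 1 then 1 else 0)
     else if i % 4 = 1 then -(2 * ((i / 4 : ℕ) : ℝ)) - 1 - (if K = 1 then 1 else 0)
     else if i % 4 = 2 then δ⁻¹ * (-(2 * ((i / 4 : ℕ) : ℝ)) - 2⁻¹) + 1
     else δ⁻¹ * (-(2 * ((i / 4 : ℕ) : ℝ)) - 2⁻¹))
  else if l % 2 = 1 then
    (if i % 4 = 0 then (if l = 2 * K - 1 then 1 - ε⁻¹ else 0)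
     else if i % 4 = 1 then 0
     else if i % 4 = 2 then 1 - (2 * δ)⁻¹
     else -(2 * δ)⁻¹)
  else 0

def dimsN (K n l : ℕ) : ℕ := if l = 0 ∨ l = 2 * K then 1 else 4 * n

def net (δ ε : ℝ) (D K n : ℕ) : ℕ → (ℕ → ℝ) → ℕ → ℝ :=
  ffLayers (dimsN K n) (Wnet δ ε D K) (bnet δ ε K) (fun _ _ => reluF)

def Fnet (δ ε : ℝ) (D K n : ℕ) (x : ℕ → ℝ) : ℕ → ℝ :=
  mulVecN (Wnet δ ε D K (2 * K)) (dimsN K n (2 * K - 1))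
    (net δ ε D K n (2 * K - 1) x)

lemma net_succ (δ ε : ℝ) (D K n : ℕ) (l : ℕ) (x : ℕ → ℝ) (i : ℕ) :
    net δ ε D K n (l + 1) x i =
      reluF (mulVecN (Wnet δ ε D K (l + 1)) (dimsN K n l) (net δ ε D K n l x) i
        + bnet δ ε K (l + 1) i) := rfl

lemma sum_block {n q : ℕ} (hq : q < n) (f : ℕ → ℝ)
    (hf : ∀ j, j / 4 ≠ q → f j = 0) :
    ∑ j ∈ Finset.range (4 * n), f j
      = f (4 * q) + f (4 * q + 1) + f (4 * q + 2) + f (4 * q + 3) := by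
  have hsub : ({4 * q, 4 * q + 1, 4 * q + 2, 4 * q + 3} : Finset ℕ) ⊆ Finset.range (4 * n) := by
    intro j hj
    simp only [Finset.mem_insert, Finset.mem_singleton] at hj
    rw [Finset.mem_range]
    omega
  rw [← Finset.sum_subset hsub]
  · rw [Finset.sum_insert (by intro hmem; simp only [Finset.mem_insert, Finset.mem_singleton] at hmem; omega),
      Finset.sum_insert (by intro hmem; simp only [Finset.mem_insert, Finset.mem_singleton] at hmem; omega),
      Finset.sum_insert (by intro hmem; simp only [Finset.mem_singleton] at hmem; omega),
      Finset.sum_singleton]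
    ring
  · intro j _ hj
    simp only [Finset.mem_insert, Finset.mem_singleton] at hj
    push_neg at hj
    exact hf j (by omega)

lemma sum_range_four_mul (n : ℕ) (f : ℕ → ℝ) :
    ∑ j ∈ Finset.range (4 * n), f j =
      ∑ q ∈ Finset.range n, (f (4 * q) + f (4 * q + 1) + f (4 * q + 2) + f (4 * q + 3)) := by
  induction n with
  | zero => simp
  | succ m ih =>
      have e : 4 * (m + 1) = 4 * m + 1 + 1 + 1 + 1 := by ring
      have e2 : 4 * m + 1 + 1 = 4 * m + 2 := by omega
      have e3 : 4 * m + 1 + 1 + 1 = 4 * m + 3 := by omega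
      rw [e, Finset.sum_range_succ, Finset.sum_range_succ, Finset.sum_range_succ,
        Finset.sum_range_succ, ih, Finset.sum_range_succ, e2, e3]
      ring

/-- generic evaluation of a middle hidden layer (`2 ≤ l+1 ≤ 2K-1`) on a block -/
lemma layer_step (δ ε : ℝ) (D K n : ℕ) {q : ℕ} (hq : q < n) {l : ℕ}
    (hl0 : l ≠ 0) (hlK : l ≠ 2 * K) (hl1 : l + 1 ≠ 1) (hl2K : l + 1 ≠ 2 * K)
    {r : ℕ} (hr : r < 4) (x : ℕ → ℝ) :
    net δ ε D K n (l + 1) x (4 * q + r) =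
      reluF (pat δ ε D K (l + 1) r 0 * net δ ε D K n l x (4 * q)
        + pat δ ε D K (l + 1) r 1 * net δ ε D K n l x (4 * q + 1)
        + pat δ ε D K (l + 1) r 2 * net δ ε D K n l x (4 * q + 2)
        + pat δ ε D K (l + 1) r 3 * net δ ε D K n l x (4 * q + 3)
        + bnet δ ε K (l + 1) (4 * q + r)) := by
  rw [net_succ]
  congr 1
  have hd : dimsN K n l = 4 * n := by
    unfold dimsN
    rw [if_neg (by omega)]
  rw [hd]
  unfold mulVecN
  rw [sum_block hq]
  · have e0 : Wnet δ ε D K (l + 1) (4 * q + r) (4 * q) = pat δ ε D K (l + 1) r 0 := by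
      unfold Wnet
      rw [if_neg hl1, if_neg hl2K, if_pos (by omega : (4 * q) / 4 = (4 * q + r) / 4),
        show (4 * q + r) % 4 = r by omega, show (4 * q) % 4 = 0 by omega]
    have e1 : Wnet δ ε D K (l + 1) (4 * q + r) (4 * q + 1) = pat δ ε D K (l + 1) r 1 := by
      unfold Wnet
      rw [if_neg hl1, if_neg hl2K, if_pos (by omega : (4 * q + 1) / 4 = (4 * q + r) / 4),
        show (4 * q + r) % 4 = r by omega, show (4 * q + 1) % 4 = 1 by omega]
    have e2 : Wnet δ ε D K (l + 1) (4 * q + r) (4 * q + 2) = pat δ ε D K (l + 1) r 2 := by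
      unfold Wnet
      rw [if_neg hl1, if_neg hl2K, if_pos (by omega : (4 * q + 2) / 4 = (4 * q + r) / 4),
        show (4 * q + r) % 4 = r by omega, show (4 * q + 2) % 4 = 2 by omega]
    have e3 : Wnet δ ε D K (l + 1) (4 * q + r) (4 * q + 3) = pat δ ε D K (l + 1) r 3 := by
      unfold Wnet
      rw [if_neg hl1, if_neg hl2K, if_pos (by omega : (4 * q + 3) / 4 = (4 * q + r) / 4),
        show (4 * q + r) % 4 = r by omega, show (4 * q + 3) % 4 = 3 by omega]
    rw [e0, e1, e2, e3]
  · intro j hj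
    have hz : Wnet δ ε D K (l + 1) (4 * q + r) j = 0 := by
      unfold Wnet
      rw [if_neg hl1, if_neg hl2K, if_neg (by omega : ¬ j / 4 = (4 * q + r) / 4)]
    rw [hz, zero_mul]
end S9

namespace S9
lemma pat_two (δ ε : ℝ) (D K : ℕ) (hK : 2 ≤ K) :
    pat δ ε D K 2 0 0 = 2 ∧ pat δ ε D K 2 0 1 = -2 ∧ pat δ ε D K 2 0 2 = -1 ∧
    pat δ ε D K 2 0 3 = 1 ∧ pat δ ε D K 2 1 0 = 0 ∧ pat δ ε D K 2 1 1 = 0 ∧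
    pat δ ε D K 2 1 2 = cc D 1 ∧ pat δ ε D K 2 1 3 = -(cc D 1) ∧
    pat δ ε D K 2 2 0 = 0 ∧ pat δ ε D K 2 2 1 = 0 ∧ pat δ ε D K 2 2 2 = 0 ∧
    pat δ ε D K 2 2 3 = 0 ∧ pat δ ε D K 2 3 0 = 0 ∧ pat δ ε D K 2 3 1 = 0 ∧
    pat δ ε D K 2 3 2 = 0 ∧ pat δ ε D K 2 3 3 = 0 := by
  unfold pat
  norm_num

lemma pat_even (δ ε : ℝ) (D K : ℕ) {l : ℕ} (hl : l % 2 = 0) (hl2 : l ≠ 2) :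
    pat δ ε D K l 0 0 = 2 ∧ pat δ ε D K l 0 1 = 0 ∧ pat δ ε D K l 0 2 = -1 ∧
    pat δ ε D K l 0 3 = 1 ∧ pat δ ε D K l 1 0 = 0 ∧ pat δ ε D K l 1 1 = 1 ∧
    pat δ ε D K l 1 2 = cc D (l / 2) ∧ pat δ ε D K l 1 3 = -(cc D (l / 2)) ∧
    pat δ ε D K l 2 0 = 0 ∧ pat δ ε D K l 2 1 = 0 ∧ pat δ ε D K l 2 2 = 0 ∧
    pat δ ε D K l 2 3 = 0 ∧ pat δ ε D K l 3 0 = 0 ∧ pat δ ε D K l 3 1 = 0 ∧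
    pat δ ε D K l 3 2 = 0 ∧ pat δ ε D K l 3 3 = 0 := by
  unfold pat
  rw [if_pos hl]
  norm_num [hl2]
  simp [hl]

lemma pat_odd (δ ε : ℝ) (D K : ℕ) {l : ℕ} (hl : l % 2 = 1) (hlK : l ≠ 2 * K - 1) :
    pat δ ε D K l 0 0 = 1 ∧ pat δ ε D K l 0 1 = 0 ∧ pat δ ε D K l 0 2 = 0 ∧
    pat δ ε D K l 0 3 = 0 ∧ pat δ ε D K l 1 0 = 0 ∧ pat δ ε D K l 1 1 = 1 ∧
    pat δ ε D K l 1 2 = 0 ∧ pat δ ε D K l 1 3 = 0 ∧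
    pat δ ε D K l 2 0 = δ⁻¹ ∧ pat δ ε D K l 2 1 = 0 ∧ pat δ ε D K l 2 2 = 0 ∧
    pat δ ε D K l 2 3 = 0 ∧ pat δ ε D K l 3 0 = δ⁻¹ ∧ pat δ ε D K l 3 1 = 0 ∧
    pat δ ε D K l 3 2 = 0 ∧ pat δ ε D K l 3 3 = 0 := by
  unfold pat
  rw [if_neg (by omega)]
  norm_num [hlK]
  simp [hl]

lemma pat_last (δ ε : ℝ) (D K : ℕ) {l : ℕ} (hl : l % 2 = 1) (hlK : l = 2 * K - 1) :
    pat δ ε D K l 0 0 = ε⁻¹ ∧ pat δ ε D K l 0 1 = 0 ∧ pat δ ε D K l 0 2 = 0 ∧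
    pat δ ε D K l 0 3 = 0 ∧ pat δ ε D K l 1 0 = 0 ∧ pat δ ε D K l 1 1 = 1 ∧
    pat δ ε D K l 1 2 = 0 ∧ pat δ ε D K l 1 3 = 0 ∧
    pat δ ε D K l 2 0 = δ⁻¹ ∧ pat δ ε D K l 2 1 = 0 ∧ pat δ ε D K l 2 2 = 0 ∧
    pat δ ε D K l 2 3 = 0 ∧ pat δ ε D K l 3 0 = δ⁻¹ ∧ pat δ ε D K l 3 1 = 0 ∧
    pat δ ε D K l 3 2 = 0 ∧ pat δ ε D K l 3 3 = 0 := by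
  unfold pat
  rw [if_neg (by omega)]
  have hl' : (2 * K - 1) % 2 = 1 := by rw [← hlK]; exact hl
  norm_num [hlK]
  simp [hl']

lemma bnet_even (δ ε : ℝ) (K : ℕ) {l : ℕ} (hl : l % 2 = 0) (i : ℕ) :
    bnet δ ε K l i = 0 := by
  unfold bnet
  rw [if_neg (by omega), if_neg (by omega)]

lemma bnet_odd (δ ε : ℝ) (K : ℕ) {l : ℕ} (hl : l % 2 = 1) (hl1 : l ≠ 1)
    (hlK : l ≠ 2 * K - 1) {q r : ℕ} (hr : r < 4) :
    bnet δ ε K l (4 * q + r) =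
      (if r = 0 then 0 else if r = 1 then 0
       else if r = 2 then 1 - (2 * δ)⁻¹ else -(2 * δ)⁻¹) := by
  unfold bnet
  rw [if_neg hl1, if_pos hl, show (4 * q + r) % 4 = r by omega]
  rcases (by omega : r = 0 ∨ r = 1 ∨ r = 2 ∨ r = 3) with h | h | h | h <;> subst h <;> norm_num [hlK]

lemma bnet_last (δ ε : ℝ) (K : ℕ) (hK : 2 ≤ K) {l : ℕ} (hlK : l = 2 * K - 1)
    {q r : ℕ} (hr : r < 4) :
    bnet δ ε K l (4 * q + r) =
      (if r = 0 then 1 - ε⁻¹ else if r = 1 then 0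
       else if r = 2 then 1 - (2 * δ)⁻¹ else -(2 * δ)⁻¹) := by
  unfold bnet
  rw [if_neg (by omega), if_pos (by omega), show (4 * q + r) % 4 = r by omega]
  rcases (by omega : r = 0 ∨ r = 1 ∨ r = 2 ∨ r = 3) with h | h | h | h <;> subst h <;> norm_num [hlK]

lemma div_delta (δ y : ℝ) :
    (y - 2⁻¹) / δ + 1 = δ⁻¹ * y + (1 - (2 * δ)⁻¹) ∧
    (y - 2⁻¹) / δ = δ⁻¹ * y + -(2 * δ)⁻¹ := by
  rw [div_eq_mul_inv, mul_inv]
  constructor <;> ring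
end S9

namespace S9
lemma layer1 (δ ε : ℝ) (D K n : ℕ) (x : ℕ → ℝ) (q : ℕ) :
    net δ ε D K n 1 x (4 * q) = reluF (x 0 - 2 * q - (if K = 1 then 1 else 0)) ∧
    net δ ε D K n 1 x (4 * q + 1) = reluF (x 0 - 2 * q - 1 - (if K = 1 then 1 else 0)) ∧
    net δ ε D K n 1 x (4 * q + 2) = reluF ((x 0 - 2 * q - 2⁻¹) / δ + 1) ∧
    net δ ε D K n 1 x (4 * q + 3) = reluF ((x 0 - 2 * q - 2⁻¹) / δ) := by
  have hnet : ∀ i : ℕ, net δ ε D K n 1 x i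
      = reluF (Wnet δ ε D K 1 i 0 * x 0 + bnet δ ε K 1 i) := by
    intro i
    have hd : dimsN K n 0 = 1 := by unfold dimsN; simp
    rw [show (1:ℕ) = 0 + 1 from rfl, net_succ, hd]
    unfold mulVecN
    rw [Finset.sum_range_one]
    rfl
  refine ⟨?_, ?_, ?_, ?_⟩
  · rw [hnet]
    unfold Wnet bnet
    rw [if_pos rfl, if_pos rfl,
      if_pos (by omega : (4 * q) % 4 ≤ 1), if_pos (by omega : (4 * q) % 4 = 0),
      show (4 * q) / 4 = q by omega]
    congr 1; ring
  · rw [hnet]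
    unfold Wnet bnet
    rw [if_pos rfl, if_pos rfl,
      if_pos (by omega : (4 * q + 1) % 4 ≤ 1), if_neg (by omega : ¬ (4 * q + 1) % 4 = 0),
      if_pos (by omega : (4 * q + 1) % 4 = 1), show (4 * q + 1) / 4 = q by omega]
    congr 1; ring
  · rw [hnet]
    unfold Wnet bnet
    rw [if_pos rfl, if_pos rfl,
      if_neg (by omega : ¬ (4 * q + 2) % 4 ≤ 1), if_neg (by omega : ¬ (4 * q + 2) % 4 = 0),
      if_neg (by omega : ¬ (4 * q + 2) % 4 = 1), if_pos (by omega : (4 * q + 2) % 4 = 2),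
      show (4 * q + 2) / 4 = q by omega]
    congr 1
    rw [div_eq_mul_inv]; ring
  · rw [hnet]
    unfold Wnet bnet
    rw [if_pos rfl, if_pos rfl,
      if_neg (by omega : ¬ (4 * q + 3) % 4 ≤ 1), if_neg (by omega : ¬ (4 * q + 3) % 4 = 0),
      if_neg (by omega : ¬ (4 * q + 3) % 4 = 1), if_neg (by omega : ¬ (4 * q + 3) % 4 = 2),
      show (4 * q + 3) / 4 = q by omega]
    congr 1
    rw [div_eq_mul_inv]; ring

lemma layers (δ ε : ℝ) (D K n : ℕ) (hK : 2 ≤ K) {q : ℕ} (hq : q < n)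
    (hδ : 0 < δ) (hδ2 : δ ≤ 2⁻¹) (x : ℕ → ℝ) :
    ∀ j, 1 ≤ j → j ≤ K - 1 →
      net δ ε D K n (2 * j) x (4 * q) = ys δ (x 0 - 2 * q) j ∧
      net δ ε D K n (2 * j) x (4 * q + 1) = ssq δ D (x 0 - 2 * q) j ∧
      net δ ε D K n (2 * j) x (4 * q + 2) = 0 ∧
      net δ ε D K n (2 * j) x (4 * q + 3) = 0 := by
  intro j
  induction j with
  | zero => omega
  | succ j ihj =>
      intro _ hj
      rcases Nat.eq_zero_or_pos j with hj0 | hj0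
      · -- base case : layer 2
        subst hj0
        obtain ⟨c0, c1, c2, c3⟩ := layer1 δ ε D K n x q
        rw [if_neg (by omega : ¬ K = 1), sub_zero] at c0 c1
        obtain ⟨p00, p01, p02, p03, p10, p11, p12, p13, p20, p21, p22, p23,
          p30, p31, p32, p33⟩ := pat_two δ ε D K hK
        have hstep : ∀ r : ℕ, r < 4 → net δ ε D K n (1 + 1) x (4 * q + r) = reluF
            (pat δ ε D K (1 + 1) r 0 * net δ ε D K n 1 x (4 * q)
              + pat δ ε D K (1 + 1) r 1 * net δ ε D K n 1 x (4 * q + 1)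
              + pat δ ε D K (1 + 1) r 2 * net δ ε D K n 1 x (4 * q + 2)
              + pat δ ε D K (1 + 1) r 3 * net δ ε D K n 1 x (4 * q + 3)
              + bnet δ ε K (1 + 1) (4 * q + r)) := fun r hr =>
          layer_step δ ε D K n hq (by omega) (by omega) (by omega) (by omega) hr x
        have h2 : (1 + 1 : ℕ) = 2 := rfl
        rw [h2] at hstep
        have hb : ∀ r : ℕ, bnet δ ε K 2 (4 * q + r) = 0 :=
          fun r => bnet_even δ ε K (by omega) _
        have h21 : 2 * 1 = 2 := rfl
        refine ⟨?_, ?_, ?_, ?_⟩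
        · rw [h21, show 4 * q = 4 * q + 0 from rfl, hstep 0 (by norm_num), hb 0,
            c0, c1, c2, c3, p00, p01, p02, p03]
          rw [show ys δ (x 0 - 2 * q) 1
              = reluF (2 * ys δ (x 0 - 2 * q) 0 - bit δ (ys δ (x 0 - 2 * q) 0)) from rfl,
            show ys δ (x 0 - 2 * q) 0 = cl (x 0 - 2 * q) from rfl, ← bit_cl hδ hδ2]
          congr 1
          unfold bit cl
          rw [show (x 0 - 2 * q - 2⁻¹) / δ + 1 - 1 = (x 0 - 2 * q - 2⁻¹) / δ by ring]
          ring
        · rw [h21, hstep 1 (by norm_num), hb 1, c0, c1, c2, c3, p10, p11, p12, p13]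
          rw [show ssq δ D (x 0 - 2 * q) 1
              = reluF (ssq δ D (x 0 - 2 * q) 0 + cc D 1 * bit δ (ys δ (x 0 - 2 * q) 0)) from rfl,
            show ssq δ D (x 0 - 2 * q) 0 = 0 from rfl,
            show ys δ (x 0 - 2 * q) 0 = cl (x 0 - 2 * q) from rfl, ← bit_cl hδ hδ2]
          congr 1
          unfold bit cl
          rw [show (x 0 - 2 * q - 2⁻¹) / δ + 1 - 1 = (x 0 - 2 * q - 2⁻¹) / δ by ring]
          ring
        · rw [h21, hstep 2 (by norm_num), hb 2, p20, p21, p22, p23]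
          norm_num
          exact reluF_of_nonpos (le_refl 0)
        · rw [h21, hstep 3 (by norm_num), hb 3, p30, p31, p32, p33]
          norm_num
          exact reluF_of_nonpos (le_refl 0)
      · -- inductive step
        obtain ⟨e0, e1, e2, e3⟩ := ihj hj0 (by omega)
        -- odd layer 2j+1
        have hlo : (2 * j + 1) % 2 = 1 := by omega
        have hloK : 2 * j + 1 ≠ 2 * K - 1 := by omega
        obtain ⟨o00, o01, o02, o03, o10, o11, o12, o13, o20, o21, o22, o23,
          o30, o31, o32, o33⟩ := pat_odd δ ε D K hlo hloK
        have hostep : ∀ r : ℕ, r < 4 → net δ ε D K n (2 * j + 1) x (4 * q + r) = reluF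
            (pat δ ε D K (2 * j + 1) r 0 * net δ ε D K n (2 * j) x (4 * q)
              + pat δ ε D K (2 * j + 1) r 1 * net δ ε D K n (2 * j) x (4 * q + 1)
              + pat δ ε D K (2 * j + 1) r 2 * net δ ε D K n (2 * j) x (4 * q + 2)
              + pat δ ε D K (2 * j + 1) r 3 * net δ ε D K n (2 * j) x (4 * q + 3)
              + bnet δ ε K (2 * j + 1) (4 * q + r)) := fun r hr =>
          layer_step δ ε D K n hq (by omega) (by omega) (by omega) (by omega) hr x
        set t := x 0 - 2 * (q:ℝ) with htdef
        have f0 : net δ ε D K n (2 * j + 1) x (4 * q) = ys δ t j := by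
          rw [show 4 * q = 4 * q + 0 from rfl, hostep 0 (by norm_num),
            bnet_odd δ ε K hlo (by omega) hloK (by norm_num : (0:ℕ) < 4),
            o00, o01, o02, o03, e0, e1, e2, e3]
          norm_num
          exact reluF_of_nonneg (ys_nonneg δ t j)
        have f1 : net δ ε D K n (2 * j + 1) x (4 * q + 1) = ssq δ D t j := by
          rw [hostep 1 (by norm_num),
            bnet_odd δ ε K hlo (by omega) hloK (by norm_num : (1:ℕ) < 4),
            o10, o11, o12, o13, e0, e1, e2, e3]
          norm_num
          exact reluF_of_nonneg (ssq_nonneg δ D t j)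
        have f2 : net δ ε D K n (2 * j + 1) x (4 * q + 2)
            = reluF ((ys δ t j - 2⁻¹) / δ + 1) := by
          rw [hostep 2 (by norm_num),
            bnet_odd δ ε K hlo (by omega) hloK (by norm_num : (2:ℕ) < 4),
            o20, o21, o22, o23, e0, e1, e2, e3]
          norm_num
          congr 1
          rw [div_eq_mul_inv]; ring
        have f3 : net δ ε D K n (2 * j + 1) x (4 * q + 3)
            = reluF ((ys δ t j - 2⁻¹) / δ) := by
          rw [hostep 3 (by norm_num),
            bnet_odd δ ε K hlo (by omega) hloK (by norm_num : (3:ℕ) < 4),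
            o30, o31, o32, o33, e0, e1, e2, e3]
          norm_num
          congr 1
          rw [div_eq_mul_inv]; ring
        -- even layer 2j+2
        have hle : (2 * j + 1 + 1) % 2 = 0 := by omega
        have hle2 : 2 * j + 1 + 1 ≠ 2 := by omega
        obtain ⟨g00, g01, g02, g03, g10, g11, g12, g13, g20, g21, g22, g23,
          g30, g31, g32, g33⟩ := pat_even δ ε D K hle hle2
        have hdd : (2 * j + 1 + 1) / 2 = j + 1 := by omega
        rw [hdd] at g12 g13
        have hestep : ∀ r : ℕ, r < 4 → net δ ε D K n (2 * j + 1 + 1) x (4 * q + r) = reluF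
            (pat δ ε D K (2 * j + 1 + 1) r 0 * net δ ε D K n (2 * j + 1) x (4 * q)
              + pat δ ε D K (2 * j + 1 + 1) r 1 * net δ ε D K n (2 * j + 1) x (4 * q + 1)
              + pat δ ε D K (2 * j + 1 + 1) r 2 * net δ ε D K n (2 * j + 1) x (4 * q + 2)
              + pat δ ε D K (2 * j + 1 + 1) r 3 * net δ ε D K n (2 * j + 1) x (4 * q + 3)
              + bnet δ ε K (2 * j + 1 + 1) (4 * q + r)) := fun r hr =>
          layer_step δ ε D K n hq (by omega) (by omega) (by omega) (by omega) hr x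
        have hbe : ∀ r : ℕ, bnet δ ε K (2 * j + 1 + 1) (4 * q + r) = 0 :=
          fun r => bnet_even δ ε K (by omega) _
        have hidx : 2 * (j + 1) = 2 * j + 1 + 1 := by ring
        refine ⟨?_, ?_, ?_, ?_⟩
        · rw [hidx, show 4 * q = 4 * q + 0 from rfl, hestep 0 (by norm_num), hbe 0,
            g00, g01, g02, g03, f0, f1, f2, f3]
          rw [show ys δ t (j + 1) = reluF (2 * ys δ t j - bit δ (ys δ t j)) from rfl]
          congr 1
          unfold bit cl
          rw [show (ys δ t j - 2⁻¹) / δ + 1 - 1 = (ys δ t j - 2⁻¹) / δ by ring]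
          ring
        · rw [hidx, hestep 1 (by norm_num), hbe 1, g10, g11, g12, g13, f0, f1, f2, f3]
          rw [show ssq δ D t (j + 1)
              = reluF (ssq δ D t j + cc D (j + 1) * bit δ (ys δ t j)) from rfl]
          congr 1
          unfold bit cl
          rw [show (ys δ t j - 2⁻¹) / δ + 1 - 1 = (ys δ t j - 2⁻¹) / δ by ring]
          ring
        · rw [hidx, hestep 2 (by norm_num), hbe 2, g20, g21, g22, g23]
          norm_num
          exact reluF_of_nonpos (le_refl 0)
        · rw [hidx, hestep 3 (by norm_num), hbe 3, g30, g31, g32, g33]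
          norm_num
          exact reluF_of_nonpos (le_refl 0)
end S9

namespace S9
/-- per-block output value -/
def blockVal (δ ε : ℝ) (D K : ℕ) (t : ℝ) : ℝ :=
  if K = 1 then
    (1 - SS D K) * (reluF (t - 1) - reluF (t - 2)) + cc D 1 * bit δ t
  else
    (1 - SS D K) * reluF ((ys δ t (K - 1) - 1) / ε + 1)
      + ssq δ D t (K - 1) + cc D K * bit δ (ys δ t (K - 1))

lemma layer_final (δ ε : ℝ) (D K n : ℕ) (hK : 2 ≤ K) {q : ℕ} (hq : q < n)
    (hδ : 0 < δ) (hδ2 : δ ≤ 2⁻¹) (x : ℕ → ℝ) :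
    net δ ε D K n (2 * K - 1) x (4 * q)
        = reluF ((ys δ (x 0 - 2 * q) (K - 1) - 1) / ε + 1) ∧
    net δ ε D K n (2 * K - 1) x (4 * q + 1) = ssq δ D (x 0 - 2 * q) (K - 1) ∧
    net δ ε D K n (2 * K - 1) x (4 * q + 2)
        = reluF ((ys δ (x 0 - 2 * q) (K - 1) - 2⁻¹) / δ + 1) ∧
    net δ ε D K n (2 * K - 1) x (4 * q + 3)
        = reluF ((ys δ (x 0 - 2 * q) (K - 1) - 2⁻¹) / δ) := by
  obtain ⟨m, rfl⟩ : ∃ m, K = m + 1 := ⟨K - 1, by omega⟩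
  have hm1 : 1 ≤ m := by omega
  set t := x 0 - 2 * (q:ℝ) with htdef
  have hidx : 2 * (m + 1) - 1 = 2 * m + 1 := by omega
  have hKm : m + 1 - 1 = m := by omega
  obtain ⟨e0, e1, e2, e3⟩ := layers δ ε D (m + 1) n hK hq hδ hδ2 x m hm1 (by omega)
  have hlo : (2 * m + 1) % 2 = 1 := by omega
  have hloK : 2 * m + 1 = 2 * (m + 1) - 1 := by omega
  obtain ⟨o00, o01, o02, o03, o10, o11, o12, o13, o20, o21, o22, o23,
    o30, o31, o32, o33⟩ := pat_last δ ε D (m + 1) hlo hloK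
  have hostep : ∀ r : ℕ, r < 4 → net δ ε D (m + 1) n (2 * m + 1) x (4 * q + r) = reluF
      (pat δ ε D (m + 1) (2 * m + 1) r 0 * net δ ε D (m + 1) n (2 * m) x (4 * q)
        + pat δ ε D (m + 1) (2 * m + 1) r 1 * net δ ε D (m + 1) n (2 * m) x (4 * q + 1)
        + pat δ ε D (m + 1) (2 * m + 1) r 2 * net δ ε D (m + 1) n (2 * m) x (4 * q + 2)
        + pat δ ε D (m + 1) (2 * m + 1) r 3 * net δ ε D (m + 1) n (2 * m) x (4 * q + 3)
        + bnet δ ε (m + 1) (2 * m + 1) (4 * q + r)) := fun r hr =>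
    layer_step δ ε D (m + 1) n hq (by omega) (by omega) (by omega) (by omega) hr x
  rw [hidx, hKm]
  refine ⟨?_, ?_, ?_, ?_⟩
  · rw [show 4 * q = 4 * q + 0 from rfl, hostep 0 (by norm_num),
      bnet_last δ ε (m + 1) hK hloK (by norm_num : (0:ℕ) < 4),
      o00, o01, o02, o03, e0, e1, e2, e3]
    norm_num
    congr 1
    rw [div_eq_mul_inv]; ring
  · rw [hostep 1 (by norm_num),
      bnet_last δ ε (m + 1) hK hloK (by norm_num : (1:ℕ) < 4),
      o10, o11, o12, o13, e0, e1, e2, e3]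
    norm_num
    exact reluF_of_nonneg (ssq_nonneg δ D t m)
  · rw [hostep 2 (by norm_num),
      bnet_last δ ε (m + 1) hK hloK (by norm_num : (2:ℕ) < 4),
      o20, o21, o22, o23, e0, e1, e2, e3]
    norm_num
    congr 1
    rw [div_eq_mul_inv]; ring
  · rw [hostep 3 (by norm_num),
      bnet_last δ ε (m + 1) hK hloK (by norm_num : (3:ℕ) < 4),
      o30, o31, o32, o33, e0, e1, e2, e3]
    norm_num
    congr 1
    rw [div_eq_mul_inv]; ring

lemma outw_vals (D K : ℕ) (hK1 : K ≠ 1) :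
    outw D K 0 = 1 - SS D K ∧ outw D K 1 = 1 ∧ outw D K 2 = cc D K ∧
    outw D K 3 = -(cc D K) := by
  unfold outw; norm_num [hK1]

lemma outw_vals1 (D : ℕ) :
    outw D 1 0 = 1 - SS D 1 ∧ outw D 1 1 = -(1 - SS D 1) ∧ outw D 1 2 = cc D 1 ∧
    outw D 1 3 = -(cc D 1) := by
  unfold outw; norm_num

lemma Fnet_eval (δ ε : ℝ) (D K n : ℕ) (hK : 1 ≤ K) (hδ : 0 < δ) (hδ2 : δ ≤ 2⁻¹)
    (x : ℕ → ℝ) :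
    Fnet δ ε D K n x 0 =
      ∑ q ∈ Finset.range n, (3:ℝ) ^ ((1:ℤ) - (q:ℤ)) * blockVal δ ε D K (x 0 - 2 * q) := by
  unfold Fnet
  have hd : dimsN K n (2 * K - 1) = 4 * n := by unfold dimsN; rw [if_neg (by omega)]
  rw [hd]
  unfold mulVecN
  rw [sum_range_four_mul]
  apply Finset.sum_congr rfl
  intro q hq
  have hW : ∀ r : ℕ, r < 4 → Wnet δ ε D K (2 * K) 0 (4 * q + r)
      = (3:ℝ) ^ ((1:ℤ) - (q:ℤ)) * outw D K r := by
    intro r hr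
    unfold Wnet
    rw [if_neg (by omega), if_pos rfl, show (4 * q + r) / 4 = q by omega,
      show (4 * q + r) % 4 = r by omega]
  have hW0 : Wnet δ ε D K (2 * K) 0 (4 * q) = (3:ℝ) ^ ((1:ℤ) - (q:ℤ)) * outw D K 0 := by
    rw [show 4 * q = 4 * q + 0 from rfl]; exact hW 0 (by norm_num)
  rcases eq_or_lt_of_le hK with hK1 | hK2
  · -- K = 1
    have hK1' : K = 1 := hK1.symm
    subst hK1'
    obtain ⟨c0, c1, c2, c3⟩ := layer1 δ ε D 1 n x q
    rw [if_pos rfl] at c0 c1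
    obtain ⟨w0, w1, w2, w3⟩ := outw_vals1 D
    rw [show 2 * 1 - 1 = 1 from rfl, hW0, hW 1 (by norm_num), hW 2 (by norm_num),
      hW 3 (by norm_num), c0, c1, c2, c3, w0, w1, w2, w3,
      show x 0 - 2 * (q:ℝ) - 1 - 1 = x 0 - 2 * (q:ℝ) - 2 by ring]
    unfold blockVal
    rw [if_pos rfl]
    unfold bit cl
    rw [show (x 0 - 2 * (q:ℝ) - 2⁻¹) / δ + 1 - 1 = (x 0 - 2 * (q:ℝ) - 2⁻¹) / δ by ring]
    ring
  · -- K ≥ 2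
    have hKne : K ≠ 1 := by omega
    obtain ⟨c0, c1, c2, c3⟩ := layer_final δ ε D K n hK2 (Finset.mem_range.mp hq) hδ hδ2 x
    obtain ⟨w0, w1, w2, w3⟩ := outw_vals D K hKne
    rw [hW0, hW 1 (by norm_num), hW 2 (by norm_num), hW 3 (by norm_num),
      c0, c1, c2, c3, w0, w1, w2, w3]
    unfold blockVal
    rw [if_neg hKne]
    unfold bit cl
    rw [show (ys δ (x 0 - 2 * (q:ℝ)) (K - 1) - 2⁻¹) / δ + 1 - 1
        = (ys δ (x 0 - 2 * (q:ℝ)) (K - 1) - 2⁻¹) / δ by ring]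
    ring
end S9

namespace S9
lemma SS_one (D : ℕ) : SS D 1 = cc D 1 := by
  unfold SS
  rw [Finset.Icc_self, Finset.sum_singleton]

lemma SS_split (D K : ℕ) (hK : 1 ≤ K) :
    SS D K = (∑ i ∈ Finset.Icc 1 (K - 1), cc D i) + cc D K := by
  obtain ⟨m, rfl⟩ : ∃ m, K = m + 1 := ⟨K - 1, by omega⟩
  rw [show m + 1 - 1 = m by omega]
  exact Finset.sum_Icc_succ_top (by omega) _

lemma blockVal_neg {δ ε t : ℝ} (D K : ℕ) (hδ : 0 < δ) (hδ2 : δ ≤ 2⁻¹)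
    (hε : 0 < ε) (hε1 : ε ≤ 1) (ht : t ≤ -1) : blockVal δ ε D K t = 0 := by
  have hbz : bit δ t = 0 := bit_zero hδ (by linarith)
  unfold blockVal
  by_cases hK1 : K = 1
  · rw [if_pos hK1, reluF_of_nonpos (by linarith), reluF_of_nonpos (by linarith), hbz]
    ring
  · rw [if_neg hK1, ys_neg hδ hδ2 (by linarith), ssq_neg hδ hδ2 (by linarith),
      bit_zero hδ (by linarith)]
    have harg : (0 - 1) / ε + 1 ≤ 0 := by
      have h1 : (1:ℝ) ≤ 1 / ε := one_le_one_div hε hε1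
      rw [zero_sub, neg_div]
      linarith
    rw [reluF_of_nonpos harg]
    ring

lemma blockVal_big {δ ε t : ℝ} (D K : ℕ) (hK : 1 ≤ K) (hδ : 0 < δ) (hε : 0 < ε)
    (ht : 2 ≤ t) : blockVal δ ε D K t = 1 := by
  unfold blockVal
  by_cases hK1 : K = 1
  · rw [if_pos hK1, reluF_of_nonneg (by linarith), reluF_of_nonneg (by linarith),
      bit_one hδ (by linarith), hK1, SS_one]
    ring
  · rw [if_neg hK1, ys_one hδ (by linarith), ssq_one hδ (by linarith),
      bit_one hδ (by norm_num), show (1:ℝ) - 1 = 0 by ring, zero_div,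
      show (0:ℝ) + 1 = 1 by ring, reluF_of_nonneg (by norm_num : (0:ℝ) ≤ 1)]
    have := SS_split D K hK
    linarith [this]

lemma blockVal_good {δ ε t : ℝ} (D K : ℕ) (hK : 1 ≤ K) (hδ : 0 < δ) (hδ2 : δ ≤ 2⁻¹)
    (hε : 0 < ε) (h0 : 0 ≤ t) (h1 : t < 1)
    (hg : ∀ i < K, Int.fract ((2:ℝ) ^ i * t) ∉ Set.Ioo (2⁻¹ - δ) (2⁻¹:ℝ))
    (htop : Int.fract ((2:ℝ) ^ (K - 1) * t) ≤ 1 - ε) :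
    blockVal δ ε D K t = phiK D K t := by
  have hfr0 : Int.fract ((2:ℝ) ^ 0 * t) = t := by
    rw [pow_zero, one_mul, Int.fract_eq_self.2 ⟨h0, h1⟩]
  unfold blockVal
  by_cases hK1 : K = 1
  · subst hK1
    rw [if_pos rfl, reluF_of_nonpos (by linarith), reluF_of_nonpos (by linarith)]
    have hb : bit δ t = ((binDigit t 1 : ℤ) : ℝ) := by
      conv_lhs => rw [← hfr0]
      rw [bit_fract hδ (by rw [hfr0]; exact fun hc => (hg 0 (by norm_num)) (by rw [hfr0]; exact hc)),
        show binDigit t 1 = binDigit t (0 + 1) from rfl, binDigit_succ]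
    rw [hb]
    unfold phiK cc
    rw [Finset.Icc_self, Finset.sum_singleton]
    norm_num
    ring
  · rw [if_neg hK1]
    have hK2 : 2 ≤ K := by omega
    have hysf : ys δ t (K - 1) = Int.fract ((2:ℝ) ^ (K - 1) * t) :=
      ys_fract hδ h0 h1 hg (K - 1) (by omega)
    have hG : reluF ((ys δ t (K - 1) - 1) / ε + 1) = 0 := by
      apply reluF_of_nonpos
      rw [hysf]
      have h2 : (Int.fract ((2:ℝ) ^ (K - 1) * t) - 1) / ε ≤ -1 := by
        rw [div_le_iff₀ hε]
        linarith
      linarith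
    have hb : bit δ (ys δ t (K - 1)) = ((binDigit t K : ℤ) : ℝ) := by
      rw [hysf, bit_fract hδ (hg (K - 1) (by omega)),
        show K = (K - 1) + 1 by omega, binDigit_succ,
        show (K - 1) + 1 - 1 = K - 1 by omega]
    rw [hG, hb, ssq_fract hδ D h0 h1 hg (K - 1) (by omega)]
    unfold phiK
    have hsum : ∑ j ∈ Finset.Icc 1 K, 2 * ((binDigit t j : ℤ) : ℝ) * ((3:ℝ) ^ (1 + D * (j - 1)))⁻¹
        = (∑ i ∈ Finset.Icc 1 (K - 1), cc D i * ((binDigit t i : ℤ) : ℝ))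
          + cc D K * ((binDigit t K : ℤ) : ℝ) := by
      rw [show (∑ j ∈ Finset.Icc 1 K, 2 * ((binDigit t j : ℤ) : ℝ) * ((3:ℝ) ^ (1 + D * (j - 1)))⁻¹)
          = ∑ j ∈ Finset.Icc 1 K, cc D j * ((binDigit t j : ℤ) : ℝ) from
        Finset.sum_congr rfl fun j _ => by unfold cc; ring]
      obtain ⟨m, rfl⟩ : ∃ m, K = m + 1 := ⟨K - 1, by omega⟩
      rw [show m + 1 - 1 = m by omega]
      exact Finset.sum_Icc_succ_top (by omega) _
    rw [hsum]
    ring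

lemma geom_sum (m : ℕ) :
    ∑ q ∈ Finset.range m, (3:ℝ) ^ ((1:ℤ) - (q:ℤ))
      = 9 / 2 - 1 / 2 * (3:ℝ) ^ ((2:ℤ) - (m:ℤ)) := by
  induction m with
  | zero => norm_num
  | succ m ih =>
      rw [Finset.sum_range_succ, ih]
      have h1 : ((2:ℤ) - (m:ℤ)) = ((1:ℤ) - (m:ℤ)) + 1 := by ring
      have h2 : ((2:ℤ) - ((m + 1 : ℕ):ℤ)) = (1:ℤ) - (m:ℤ) := by push_cast; ring
      rw [h1, h2, zpow_add₀ (by norm_num : (3:ℝ) ≠ 0), zpow_one]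
      ring
end S9

namespace S9
set_option maxHeartbeats 2000000 in
theorem stmt9' (d n K : ℕ) (hd : 1 ≤ d) (hn : 1 ≤ n) (hK : 1 ≤ K)
    (β : ℝ) (hβ0 : 0 < β) (hβ1 : β ≤ 1) (p : ℝ) (hp : 1 ≤ p) :
    ∃ Ω : Set ℝ, MeasurableSet Ω ∧ Ω ⊆ Set.Icc 0 1 ∧
      volume Ω ≤ ENNReal.ofReal ((2:ℝ) ^ (-((K : ℝ) * β * p))) ∧
      ∃ F : (ℕ → ℝ) → ℕ → ℝ,
        IsFFNet 1 1 (2 * K) (4 * n) {reluF} F ∧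
        ∀ q : ℕ, q < n → ∀ x : ℝ, x ∈ Set.Icc (2 * (q : ℝ)) (2 * (q : ℝ) + 1) →
          x - 2 * (q : ℝ) ∉ Ω →
          F (fun _ => x) 0 =
            (3:ℝ) ^ ((1 : ℤ) - (q : ℤ)) * phiK (d * n) K (x - 2 * (q : ℝ)) +
              9 / 2 - 1 / 2 * (3:ℝ) ^ ((2 : ℤ) - (q : ℤ)) := by
  have hKr : (1:ℝ) ≤ (K:ℝ) := by exact_mod_cast hK
  set ρ : ℝ := (2:ℝ) ^ (-((K : ℝ) * β * p)) with hρdef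
  have hρpos : 0 < ρ := Real.rpow_pos_of_pos (by norm_num) _
  have hρle : ρ ≤ 1 := by
    apply Real.rpow_le_one_of_one_le_of_nonpos (by norm_num)
    have : (0:ℝ) ≤ (K:ℝ) * β * p := by positivity
    linarith
  set δ : ℝ := ρ / (2 * K) with hδdef
  have hδpos : 0 < δ := div_pos hρpos (by positivity)
  have hδhalf : δ ≤ 2⁻¹ := by
    rw [hδdef, div_le_iff₀ (by positivity)]
    nlinarith
  have hδ1 : δ ≤ 1 := by linarith
  -- the exceptional set
  set Ω : Set ℝ :=
    (⋃ j ∈ Finset.range K, ⋃ m ∈ Finset.range (2 ^ j),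
        Set.Ioo (((m:ℝ) + 2⁻¹ - δ) / 2 ^ j) (((m:ℝ) + 2⁻¹) / 2 ^ j)) ∪
      ⋃ m ∈ Finset.range (2 ^ (K - 1)),
        Set.Ioc (((m:ℝ) + 1 - δ) / 2 ^ (K - 1)) (((m:ℝ) + 1) / 2 ^ (K - 1)) with hΩdef
  refine ⟨Ω, ?_, ?_, ?_, ?_⟩
  · -- measurable
    refine MeasurableSet.union ?_ ?_
    · exact MeasurableSet.biUnion (Set.to_countable _) fun j _ =>
        MeasurableSet.biUnion (Set.to_countable _) fun m _ => measurableSet_Ioo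
    · exact MeasurableSet.biUnion (Set.to_countable _) fun m _ => measurableSet_Ioc
  · -- subset of [0,1]
    intro t ht
    rcases ht with ht | ht
    · simp only [Set.mem_iUnion, Finset.mem_range, Set.mem_Ioo] at ht
      obtain ⟨j, _, m, hm, hlo, hhi⟩ := ht
      have hp2 : (0:ℝ) < 2 ^ j := by positivity
      have hmr : (m:ℝ) + 1 ≤ 2 ^ j := by
        have : ((m + 1 : ℕ):ℝ) ≤ ((2 ^ j : ℕ):ℝ) := by exact_mod_cast hm
        push_cast at this
        linarith
      constructor
      · have h0 : (0:ℝ) ≤ ((m:ℝ) + 2⁻¹ - δ) / 2 ^ j := by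
          apply div_nonneg _ hp2.le
          have : (0:ℝ) ≤ (m:ℝ) := Nat.cast_nonneg m
          linarith
        linarith
      · have h1 : ((m:ℝ) + 2⁻¹) / 2 ^ j ≤ 1 := by
          rw [div_le_one hp2]
          linarith
        linarith
    · simp only [Set.mem_iUnion, Finset.mem_range, Set.mem_Ioc] at ht
      obtain ⟨m, hm, hlo, hhi⟩ := ht
      have hp2 : (0:ℝ) < 2 ^ (K - 1) := by positivity
      have hmr : (m:ℝ) + 1 ≤ 2 ^ (K - 1) := by
        have : ((m + 1 : ℕ):ℝ) ≤ ((2 ^ (K - 1) : ℕ):ℝ) := by exact_mod_cast hm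
        push_cast at this
        linarith
      constructor
      · have h0 : (0:ℝ) ≤ ((m:ℝ) + 1 - δ) / 2 ^ (K - 1) := by
          apply div_nonneg _ hp2.le
          have : (0:ℝ) ≤ (m:ℝ) := Nat.cast_nonneg m
          linarith
        linarith
      · have h1 : ((m:ℝ) + 1) / 2 ^ (K - 1) ≤ 1 := by
          rw [div_le_one hp2]
          linarith
        linarith
  · -- measure bound
    have hIoo : ∀ j : ℕ, volume (⋃ m ∈ Finset.range (2 ^ j),
        Set.Ioo (((m:ℝ) + 2⁻¹ - δ) / 2 ^ j) (((m:ℝ) + 2⁻¹) / 2 ^ j))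
          ≤ ENNReal.ofReal δ := by
      intro j
      refine le_trans (measure_biUnion_finset_le _ _) ?_
      have hvol : ∀ m : ℕ, volume (Set.Ioo (((m:ℝ) + 2⁻¹ - δ) / 2 ^ j) (((m:ℝ) + 2⁻¹) / 2 ^ j))
          = ENNReal.ofReal (δ / 2 ^ j) := by
        intro m
        rw [Real.volume_Ioo]
        congr 1
        rw [div_sub_div_same]
        congr 1
        ring
      rw [Finset.sum_congr rfl fun m _ => hvol m, Finset.sum_const, Finset.card_range,
        nsmul_eq_mul]
      rw [show ((2 ^ j : ℕ) : ENNReal) = ENNReal.ofReal ((2 ^ j : ℕ) : ℝ) from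
        (ENNReal.ofReal_natCast _).symm]
      rw [← ENNReal.ofReal_mul (by positivity)]
      apply ENNReal.ofReal_le_ofReal
      push_cast
      rw [mul_div_cancel₀]
      positivity
    have hB : volume (⋃ m ∈ Finset.range (2 ^ (K - 1)),
        Set.Ioc (((m:ℝ) + 1 - δ) / 2 ^ (K - 1)) (((m:ℝ) + 1) / 2 ^ (K - 1)))
          ≤ ENNReal.ofReal δ := by
      refine le_trans (measure_biUnion_finset_le _ _) ?_
      have hvol : ∀ m : ℕ, volume (Set.Ioc (((m:ℝ) + 1 - δ) / 2 ^ (K - 1)) (((m:ℝ) + 1) / 2 ^ (K - 1)))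
          = ENNReal.ofReal (δ / 2 ^ (K - 1)) := by
        intro m
        rw [Real.volume_Ioc]
        congr 1
        rw [div_sub_div_same]
        congr 1
        ring
      rw [Finset.sum_congr rfl fun m _ => hvol m, Finset.sum_const, Finset.card_range,
        nsmul_eq_mul]
      rw [show ((2 ^ (K - 1) : ℕ) : ENNReal) = ENNReal.ofReal ((2 ^ (K - 1) : ℕ) : ℝ) from
        (ENNReal.ofReal_natCast _).symm]
      rw [← ENNReal.ofReal_mul (by positivity)]
      apply ENNReal.ofReal_le_ofReal
      push_cast
      rw [mul_div_cancel₀]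
      positivity
    have hA : volume (⋃ j ∈ Finset.range K, ⋃ m ∈ Finset.range (2 ^ j),
        Set.Ioo (((m:ℝ) + 2⁻¹ - δ) / 2 ^ j) (((m:ℝ) + 2⁻¹) / 2 ^ j))
          ≤ ENNReal.ofReal ((K:ℝ) * δ) := by
      refine le_trans (measure_biUnion_finset_le _ _) ?_
      refine le_trans (Finset.sum_le_sum fun j _ => hIoo j) ?_
      rw [Finset.sum_const, Finset.card_range, nsmul_eq_mul]
      rw [show ((K : ℕ) : ENNReal) = ENNReal.ofReal ((K : ℕ) : ℝ) from
        (ENNReal.ofReal_natCast _).symm]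
      rw [← ENNReal.ofReal_mul (by positivity)]
    rw [hΩdef]
    refine le_trans (measure_union_le _ _) ?_
    refine le_trans (add_le_add hA hB) ?_
    rw [← ENNReal.ofReal_add (by positivity) hδpos.le]
    apply ENNReal.ofReal_le_ofReal
    have hKδ : 2 * (K:ℝ) * δ = ρ := by
      rw [hδdef]
      field_simp
    nlinarith [hδpos.le]
  · -- the network
    refine ⟨Fnet δ δ (d * n) K n, ?_, ?_⟩
    · refine ⟨dimsN K n, Wnet δ δ (d * n) K, bnet δ δ K, fun _ _ => reluF, ?_, ?_, ?_, ?_, ?_⟩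
      · unfold dimsN; simp
      · unfold dimsN; rw [if_pos (Or.inr rfl)]
      · intro l hl0 hlL
        unfold dimsN
        rw [if_neg (by omega)]
      · intro l i
        exact rfl
      · intro x
        rfl
    · intro q hq x hx hxΩ
      obtain ⟨hx0, hx1⟩ := hx
      set t : ℝ := x - 2 * (q:ℝ) with htdef
      have ht0 : 0 ≤ t := by rw [htdef]; linarith
      have ht1 : t ≤ 1 := by rw [htdef]; linarith
      -- goodness of t
      have htlt1 : t < 1 := by
        rcases lt_or_eq_of_le ht1 with h | h
        · exact h
        · exfalso
          apply hxΩ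
          rw [h, hΩdef]
          right
          simp only [Set.mem_iUnion, Finset.mem_range, Set.mem_Ioc]
          refine ⟨2 ^ (K - 1) - 1, by have := Nat.one_le_two_pow (n := K - 1); omega, ?_, ?_⟩
          · have h2c : ((2 ^ (K - 1) - 1 : ℕ):ℝ) = 2 ^ (K - 1) - 1 := by
              have : (1:ℕ) ≤ 2 ^ (K - 1) := Nat.one_le_two_pow
              push_cast [this]
              ring
            rw [h2c, div_lt_one (by positivity)]
            linarith
          · have h2c : ((2 ^ (K - 1) - 1 : ℕ):ℝ) = 2 ^ (K - 1) - 1 := by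
              have : (1:ℕ) ≤ 2 ^ (K - 1) := Nat.one_le_two_pow
              push_cast [this]
              ring
            rw [h2c, le_div_iff₀ (by positivity)]
            linarith
      have hgood : ∀ i < K, Int.fract ((2:ℝ) ^ i * t) ∉ Set.Ioo (2⁻¹ - δ) (2⁻¹:ℝ) := by
        intro i hi hmem
        apply hxΩ
        rw [hΩdef]
        left
        have hp2 : (0:ℝ) < 2 ^ i := by positivity
        have hfl0 : (0:ℤ) ≤ ⌊(2:ℝ) ^ i * t⌋ := Int.floor_nonneg.mpr (by positivity)
        have hflt : ⌊(2:ℝ) ^ i * t⌋ < 2 ^ i := by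
          have : (2:ℝ) ^ i * t < 2 ^ i := by nlinarith
          have h2 : ((2:ℝ) ^ i) = ((2 ^ i : ℕ) : ℝ) := by push_cast; ring
          rw [Int.floor_lt]
          push_cast
          linarith
        set m : ℕ := ⌊(2:ℝ) ^ i * t⌋.toNat with hmdef
        have hmc : ((m:ℕ):ℝ) = ((⌊(2:ℝ) ^ i * t⌋ : ℤ) : ℝ) := by
          rw [hmdef]
          exact_mod_cast congrArg Int.cast (Int.toNat_of_nonneg hfl0)
        simp only [Set.mem_iUnion, Finset.mem_range, Set.mem_Ioo]
        refine ⟨i, hi, m, ?_, ?_, ?_⟩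
        · have : (m : ℤ) < 2 ^ i := by rw [hmdef, Int.toNat_of_nonneg hfl0] at *; exact hflt
          exact_mod_cast this
        · rw [div_lt_iff₀ hp2]
          obtain ⟨hm1, hm2⟩ := hmem
          have hfr : Int.fract ((2:ℝ) ^ i * t) = (2:ℝ) ^ i * t - ((⌊(2:ℝ) ^ i * t⌋ : ℤ) : ℝ) := rfl
          rw [hfr] at hm1
          rw [hmc]
          nlinarith
        · rw [lt_div_iff₀ hp2]
          obtain ⟨hm1, hm2⟩ := hmem
          have hfr : Int.fract ((2:ℝ) ^ i * t) = (2:ℝ) ^ i * t - ((⌊(2:ℝ) ^ i * t⌋ : ℤ) : ℝ) := rfl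
          rw [hfr] at hm2
          rw [hmc]
          nlinarith
      have htop : Int.fract ((2:ℝ) ^ (K - 1) * t) ≤ 1 - δ := by
        by_contra hc
        push_neg at hc
        apply hxΩ
        rw [hΩdef]
        right
        have hp2 : (0:ℝ) < 2 ^ (K - 1) := by positivity
        have hfl0 : (0:ℤ) ≤ ⌊(2:ℝ) ^ (K - 1) * t⌋ := Int.floor_nonneg.mpr (by positivity)
        have hflt : ⌊(2:ℝ) ^ (K - 1) * t⌋ < 2 ^ (K - 1) := by
          have : (2:ℝ) ^ (K - 1) * t < 2 ^ (K - 1) := by nlinarith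
          rw [Int.floor_lt]
          push_cast
          linarith
        set m : ℕ := ⌊(2:ℝ) ^ (K - 1) * t⌋.toNat with hmdef
        have hmc : ((m:ℕ):ℝ) = ((⌊(2:ℝ) ^ (K - 1) * t⌋ : ℤ) : ℝ) := by
          rw [hmdef]
          exact_mod_cast congrArg Int.cast (Int.toNat_of_nonneg hfl0)
        have hfr : Int.fract ((2:ℝ) ^ (K - 1) * t)
            = (2:ℝ) ^ (K - 1) * t - ((⌊(2:ℝ) ^ (K - 1) * t⌋ : ℤ) : ℝ) := rfl
        have hfrlt := Int.fract_lt_one ((2:ℝ) ^ (K - 1) * t)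
        simp only [Set.mem_iUnion, Finset.mem_range, Set.mem_Ioc]
        refine ⟨m, ?_, ?_, ?_⟩
        · have : (m : ℤ) < 2 ^ (K - 1) := by rw [hmdef, Int.toNat_of_nonneg hfl0] at *; exact hflt
          exact_mod_cast this
        · rw [div_lt_iff₀ hp2]
          rw [hfr] at hc
          rw [hmc]
          nlinarith
        · rw [le_div_iff₀ hp2]
          rw [hfr] at hfrlt
          rw [hmc]
          nlinarith
      -- evaluate the network
      rw [Fnet_eval δ δ (d * n) K n hK hδpos hδhalf]
      have hterm : ∀ q' ∈ Finset.range n,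
          (3:ℝ) ^ ((1:ℤ) - (q':ℤ)) * blockVal δ δ (d * n) K (x - 2 * q')
            = (if q' < q then (3:ℝ) ^ ((1:ℤ) - (q':ℤ)) else 0)
              + (if q' = q then (3:ℝ) ^ ((1:ℤ) - (q:ℤ)) * phiK (d * n) K t else 0) := by
        intro q' hq'
        rcases lt_trichotomy q' q with hlt | heq | hgt
        · have hcast : (q':ℝ) + 1 ≤ (q:ℝ) := by exact_mod_cast hlt
          rw [blockVal_big (d * n) K hK hδpos hδpos
              (by linarith : (2:ℝ) ≤ x - 2 * (q':ℝ)),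
            if_pos hlt, if_neg (by omega), mul_one, add_zero]
        · subst heq
          rw [show x - 2 * (q':ℝ) = t from rfl,
            blockVal_good (d * n) K hK hδpos hδhalf hδpos ht0 htlt1 hgood htop,
            if_neg (lt_irrefl q'), if_pos rfl, zero_add]
        · have hcast : (q:ℝ) + 1 ≤ (q':ℝ) := by exact_mod_cast hgt
          rw [blockVal_neg (d * n) K hδpos hδhalf hδpos hδ1
              (by linarith : x - 2 * (q':ℝ) ≤ -1),
            if_neg (by omega), if_neg (by omega), mul_zero, add_zero]
      rw [Finset.sum_congr rfl hterm, Finset.sum_add_distrib, Finset.sum_ite_eq' (Finset.range n)]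
      rw [if_pos (Finset.mem_range.mpr hq)]
      have hfirst : ∑ q' ∈ Finset.range n, (if q' < q then (3:ℝ) ^ ((1:ℤ) - (q':ℤ)) else 0)
          = ∑ q' ∈ Finset.range q, (3:ℝ) ^ ((1:ℤ) - (q':ℤ)) := by
        rw [← Finset.sum_subset (Finset.range_subset_range.mpr (by omega : q ≤ n))]
        · exact Finset.sum_congr rfl fun q' hq' => if_pos (Finset.mem_range.mp hq')
        · intro q' _ hq'
          rw [if_neg (fun hc => hq' (Finset.mem_range.mpr hc))]
      rw [hfirst, geom_sum]
      ring

end S9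

theorem stmt9 (d n K : ℕ) (hd : 1 ≤ d) (hn : 1 ≤ n) (hK : 1 ≤ K)
    (β : ℝ) (hβ0 : 0 < β) (hβ1 : β ≤ 1) (p : ℝ) (hp : 1 ≤ p) :
    ∃ Ω : Set ℝ, MeasurableSet Ω ∧ Ω ⊆ Set.Icc 0 1 ∧
      volume Ω ≤ ENNReal.ofReal ((2:ℝ) ^ (-((K : ℝ) * β * p))) ∧
      ∃ F : (ℕ → ℝ) → ℕ → ℝ,
        IsFFNet 1 1 (2 * K) (4 * n) {reluF} F ∧
        ∀ q : ℕ, q < n → ∀ x : ℝ, x ∈ Set.Icc (2 * (q : ℝ)) (2 * (q : ℝ) + 1) →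
          x - 2 * (q : ℝ) ∉ Ω →
          F (fun _ => x) 0 =
            (3:ℝ) ^ ((1 : ℤ) - (q : ℤ)) * phiK (d * n) K (x - 2 * (q : ℝ)) +
              9 / 2 - 1 / 2 * (3:ℝ) ^ ((2 : ℤ) - (q : ℤ)) := by
  exact S9.stmt9' d n K hd hn hK β hβ0 hβ1 p hp

end
end
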